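/- arXiv:1712.04122 — 6 statements merged into one kernel-verified Lean document; each statement's English description precedes it below -/
import Mathlib

section
/- Let V be a finite ground set, f : 2^V → ℝ a normalized (f(∅) = 0), nondecreasing, submodular set function, and k a positive integer. Let S_0 = ∅ and S_{i+1} = S_i ∪ {e_i} for i = 0, …, k−1, where e_i ∈ V \ S_i maximizes f(S_i ∪ {e}) − f(S_i) over all e ∈ V \ S_i. Then f(S_k) ≥ (1 − 1/e) · max{ f(S) : S ⊆ V, |S| ≤ k }. -/
/-- Nemhauser–Wolsey–Fisher (1978): the greedy algorithm for maximizing a normalized,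
nondecreasing, submodular set function under a cardinality constraint `k` achieves at
least a `(1 - 1/e)` fraction of the optimal value. -/
theorem greedy_submodular_one_sub_inv_e_bound
    {V : Type*} [Fintype V] [DecidableEq V]
    (f : Finset V → ℝ)
    (hnorm : f ∅ = 0)
    (hmono : ∀ (A : Finset V) (s : V), f (insert s A) ≥ f A)
    (hsub : ∀ (A B : Finset V), A ⊆ B → ∀ s ∉ B,
      f (insert s A) - f A ≥ f (insert s B) - f B)
    (k : ℕ) (hk : 0 < k)
    (S : ℕ → Finset V) (e : ℕ → V)
    (hS0 : S 0 = ∅)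
    (hstep : ∀ i < k, S (i + 1) = insert (e i) (S i))
    (hmem : ∀ i < k, e i ∉ S i)
    (hgreedy : ∀ i < k, ∀ x ∉ S i,
      f (insert (e i) (S i)) - f (S i) ≥ f (insert x (S i)) - f (S i)) :
    ∀ T : Finset V, T.card ≤ k →
      f (S k) ≥ (1 - (Real.exp 1)⁻¹) * f T := by
  intro T hT
  have monoU : ∀ (A B : Finset V), f A ≤ f (A ∪ B) := by
    intro A B
    induction B using Finset.induction with
    | empty => simp
    | @insert b B' hbB' ih =>
      calc f A ≤ f (A ∪ B') := ih
        _ ≤ f (insert b (A ∪ B')) := hmono _ _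
        _ = f (A ∪ insert b B') := by rw [Finset.union_insert]
  have hfT0 : 0 ≤ f T := by
    have := monoU ∅ T
    simpa [hnorm] using this
  have sumbound : ∀ (A B : Finset V),
      f (A ∪ B) - f A ≤ ∑ x ∈ B \ A, (f (insert x A) - f A) := by
    intro A B
    induction B using Finset.induction with
    | empty => simp
    | @insert b B' hbB' ih =>
      by_cases hbA : b ∈ A
      · have h1 : A ∪ insert b B' = A ∪ B' := by
          rw [Finset.union_insert, Finset.insert_eq_self.mpr (Finset.mem_union_left _ hbA)]
        have h2 : insert b B' \ A = B' \ A := Finset.insert_sdiff_of_mem _ hbA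
        rw [h1, h2]; exact ih
      · have h1 : A ∪ insert b B' = insert b (A ∪ B') := by
          rw [Finset.union_insert]
        have h2 : insert b B' \ A = insert b (B' \ A) :=
          Finset.insert_sdiff_of_notMem _ hbA
        have hbAB : b ∉ A ∪ B' := by simp [hbA, hbB']
        have hsb := hsub A (A ∪ B') Finset.subset_union_left b hbAB
        have hbn : b ∉ B' \ A := by simp [hbB']
        rw [h1, h2, Finset.sum_insert hbn]
        have : f (insert b (A ∪ B')) - f A =
            (f (insert b (A ∪ B')) - f (A ∪ B')) + (f (A ∪ B') - f A) := by ring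
        rw [this]
        linarith
  set c : ℝ := (k : ℝ) with hc
  have hc0 : 0 < c := by rw [hc]; exact_mod_cast hk
  have hc1 : (1:ℝ) ≤ c := by rw [hc]; exact_mod_cast hk
  have hr0 : 0 ≤ 1 - 1/c := by
    have : 1/c ≤ 1 := by
      rw [div_le_one hc0]; exact hc1
    linarith
  have key : ∀ i < k, f T - f (S (i+1)) ≤ (1 - 1/c) * (f T - f (S i)) := by
    intro i hi
    have hst := hstep i hi
    have hδ : 0 ≤ f (S (i+1)) - f (S i) := by
      rw [hst]; have := hmono (S i) (e i); linarith
    have hsum : f T - f (S i) ≤ c * (f (S (i+1)) - f (S i)) := by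
      have h1 : f T ≤ f (S i ∪ T) := by
        rw [Finset.union_comm]; exact monoU T (S i)
      have h2 := sumbound (S i) T
      have h3 : ∑ x ∈ T \ S i, (f (insert x (S i)) - f (S i)) ≤
          (T \ S i).card * (f (S (i+1)) - f (S i)) := by
        rw [Finset.card_eq_sum_ones, Nat.cast_sum, Finset.sum_mul]
        apply Finset.sum_le_sum
        intro x hx
        have hxn : x ∉ S i := (Finset.mem_sdiff.mp hx).2
        have := hgreedy i hi x hxn
        rw [hst]
        push_cast
        linarith
      have h4 : ((T \ S i).card : ℝ) ≤ c := by
        have : (T \ S i).card ≤ k :=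
          le_trans (Finset.card_le_card (Finset.sdiff_subset)) hT
        rw [hc]; exact_mod_cast this
      have h5 : ((T \ S i).card : ℝ) * (f (S (i+1)) - f (S i)) ≤
          c * (f (S (i+1)) - f (S i)) := mul_le_mul_of_nonneg_right h4 hδ
      linarith
    have hdiv : (f T - f (S i)) / c ≤ f (S (i+1)) - f (S i) := by
      rw [div_le_iff₀ hc0]; linarith [hsum]
    have heq : (1 - 1/c) * (f T - f (S i)) =
        (f T - f (S i)) - (f T - f (S i)) / c := by
      field_simp
    rw [heq]; linarith
  have iter : ∀ i ≤ k, f T - f (S i) ≤ (1 - 1/c)^i * f T := by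
    intro i
    induction i with
    | zero => intro _; simp [hS0, hnorm]
    | succ n ih =>
      intro hn
      have hnk : n < k := hn
      have h1 := key n hnk
      have h2 := ih (le_of_lt hnk)
      calc f T - f (S (n+1)) ≤ (1 - 1/c) * (f T - f (S n)) := h1
        _ ≤ (1 - 1/c) * ((1 - 1/c)^n * f T) := mul_le_mul_of_nonneg_left h2 hr0
        _ = (1 - 1/c)^(n+1) * f T := by ring
  have hfinal := iter k le_rfl
  have hexp : (1 - 1/c)^k ≤ (Real.exp 1)⁻¹ := by
    have h1 : 1 - 1/c ≤ Real.exp (-(1/c)) := by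
      have := Real.add_one_le_exp (-(1/c))
      linarith
    have h2 : (1 - 1/c)^k ≤ (Real.exp (-(1/c)))^k :=
      pow_le_pow_left₀ hr0 h1 k
    have h3 : (Real.exp (-(1/c)))^k = Real.exp (k * (-(1/c))) :=
      (Real.exp_nat_mul _ k).symm
    have h4 : (k:ℝ) * (-(1/c)) = -1 := by
      rw [hc]; field_simp
    rw [h3, h4, Real.exp_neg] at h2
    exact h2
  have : (1 - 1/c)^k * f T ≤ (Real.exp 1)⁻¹ * f T :=
    mul_le_mul_of_nonneg_right hexp hfT0
  linarith
end

section
/- Let V be a finite ground set and f : 2^V → ℝ a nonnegative, nondecreasing, normalized set function. Suppose γ, α ∈ (0, 1] are such that (i) ∑_{ω ∈ Ω \ S} ρ_ω(S) ≥ γ · ρ_Ω(S) for all Ω, S ⊆ V, and (ii) ρ_j((S \ {j}) ∪ Ω) ≥ (1 − α) · ρ_j(S \ {j}) for all Ω, S ⊆ V and all j ∈ S \ Ω. Let k be a positive integer and let S_0 = ∅, S_{i+1} = S_i ∪ {e_i}, where e_i ∈ V \ S_i maximizes f(S_i ∪ {e}) − f(S_i) over e ∈ V \ S_i, for i = 0,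 …, k−1. Then f(S_k) ≥ (1/α)·(1 − e^{−αγ}) · max{ f(S) : S ⊆ V, |S| ≤ k }. -/
private lemma one_sub_le_exp_neg' (x : ℝ) : 1 - x ≤ Real.exp (-x) := by
  have h := Real.add_one_le_exp (-x); linarith

private lemma exp_le_one' {x : ℝ} (hx : 0 ≤ x) : Real.exp (-x) ≤ 1 := by
  calc Real.exp (-x) ≤ Real.exp 0 := Real.exp_le_exp.mpr (by linarith)
  _ = 1 := Real.exp_zero

private lemma psi_nonneg' {α γ n r : ℝ} (hα : 0 < α) (hγ : 0 ≤ γ) (hn : 0 ≤ n) (hr : 0 ≤ r) :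
    0 ≤ 1/α * (1 - Real.exp (-(α*γ*n/r))) := by
  have h : Real.exp (-(α*γ*n/r)) ≤ 1 :=
    exp_le_one' (div_nonneg (mul_nonneg (mul_nonneg hα.le hγ) hn) hr)
  have h2 : (0:ℝ) ≤ 1/α := by positivity
  nlinarith

private lemma psi_le_one' {α γ n r : ℝ} (hα : 0 < α) (hγ0 : 0 < γ) (hγ1 : γ ≤ 1)
    (hn : 0 ≤ n) (hnr : n ≤ r) :
    1/α * (1 - Real.exp (-(α*γ*n/r))) ≤ 1 := by
  have hx : α*γ*n/r ≤ α := by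
    rcases eq_or_lt_of_le hn with h | h
    · rw [← h]; simpa using hα.le
    · have hr : 0 < r := lt_of_lt_of_le h hnr
      rw [div_le_iff₀ hr]
      have hgn : γ*n ≤ r := by nlinarith
      nlinarith [mul_le_mul_of_nonneg_left hgn hα.le]
  have h1 := one_sub_le_exp_neg' (α*γ*n/r)
  have h2 : 1/α * (1 - Real.exp (-(α*γ*n/r))) ≤ 1/α * α :=
    mul_le_mul_of_nonneg_left (by linarith) (by positivity)
  rwa [one_div_mul_cancel hα.ne'] at h2

private lemma stepn1' {α γ r : ℝ} (hα0 : 0 < α) (hr0 : 0 < r) :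
    1/α * (1 - Real.exp (-(α*γ*1/r))) ≤ γ/r := by
  have h := one_sub_le_exp_neg' (α*γ*1/r)
  have h2 : 1/α * (1 - Real.exp (-(α*γ*1/r))) ≤ 1/α * (α*γ*1/r) :=
    mul_le_mul_of_nonneg_left (by linarith) (by positivity)
  calc 1/α * (1 - Real.exp (-(α*γ*1/r))) ≤ 1/α * (α*γ*1/r) := h2
  _ = γ/r := by field_simp

private lemma step2' {α γ n r : ℝ} (hα0 : 0 < α) (hγ0 : 0 < γ) (hr : 1 ≤ r) :
    1/α * (1 - Real.exp (-(α*γ*n/r))) ≤ γ/r + 1/α * (1 - Real.exp (-(α*γ*(n-1)/r))) * (1 - α*(γ/r)) := by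
  have hr0 : (0:ℝ) < r := by linarith
  have hsplit : -(α*γ*n/r) = -(α*γ*(n-1)/r) + -(α*γ/r) := by
    field_simp; ring
  have hEeq : Real.exp (-(α*γ*n/r)) = Real.exp (-(α*γ*(n-1)/r)) * Real.exp (-(α*γ/r)) := by
    rw [hsplit, Real.exp_add]
  have h1 : 1 - α*γ/r ≤ Real.exp (-(α*γ/r)) := one_sub_le_exp_neg' _
  have hE'pos : 0 < Real.exp (-(α*γ*(n-1)/r)) := Real.exp_pos _
  have hkey : Real.exp (-(α*γ*(n-1)/r)) * (1 - α*γ/r) ≤ Real.exp (-(α*γ*n/r)) := by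
    rw [hEeq]
    exact mul_le_mul_of_nonneg_left h1 hE'pos.le
  have hexpand : γ/r + 1/α * (1 - Real.exp (-(α*γ*(n-1)/r))) * (1 - α*(γ/r)) - 1/α * (1 - Real.exp (-(α*γ*n/r)))
      = 1/α * (Real.exp (-(α*γ*n/r)) - Real.exp (-(α*γ*(n-1)/r)) * (1 - α*γ/r)) := by
    field_simp; ring
  have h0 : 0 ≤ 1/α * (Real.exp (-(α*γ*n/r)) - Real.exp (-(α*γ*(n-1)/r)) * (1 - α*γ/r)) :=
    mul_nonneg (by positivity) (by linarith)
  linarith [hexpand, h0]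

private lemma step1' {α γ n r : ℝ} (hα0 : 0 < α) (hα1 : α ≤ 1) (hγ0 : 0 < γ) (hγ1 : γ ≤ 1)
    (hn : 1 ≤ n) (hnr : n ≤ r) (hr2 : 2 ≤ r) :
    1/α * (1 - Real.exp (-(α*γ*n/r))) ≤ γ/r + 1/α * (1 - Real.exp (-(α*γ*(n-1)/(r-1)))) * (1 - γ/r) := by
  have hr0 : (0:ℝ) < r := by linarith
  have hr1 : (0:ℝ) < r - 1 := by linarith
  have hsplit : -(α*γ*n/r) = -(α*γ*(n-1)/(r-1)) + -(α*γ*((r-n)/(r*(r-1)))) := by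
    field_simp; ring
  have hEeq : Real.exp (-(α*γ*n/r)) = Real.exp (-(α*γ*(n-1)/(r-1))) * Real.exp (-(α*γ*((r-n)/(r*(r-1))))) := by
    rw [hsplit, Real.exp_add]
  have h1 : 1 - α*γ*((r-n)/(r*(r-1))) ≤ Real.exp (-(α*γ*((r-n)/(r*(r-1))))) := one_sub_le_exp_neg' _
  have hE'pos : 0 < Real.exp (-(α*γ*(n-1)/(r-1))) := Real.exp_pos _
  have hE'low : 1 - α*γ*(n-1)/(r-1) ≤ Real.exp (-(α*γ*(n-1)/(r-1))) := one_sub_le_exp_neg' _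
  have hX : 0 ≤ γ/r - α*γ*((r-n)/(r*(r-1))) := by
    have h2 : α*(r-n) ≤ r - 1 := by nlinarith
    have h3 : γ/r - α*γ*((r-n)/(r*(r-1))) = γ*((r-1) - α*(r-n))/(r*(r-1)) := by
      field_simp
    rw [h3]
    apply div_nonneg _ (by positivity)
    nlinarith
  have hA : Real.exp (-(α*γ*(n-1)/(r-1))) * (γ/r - α*γ*((r-n)/(r*(r-1)))) ≤
      Real.exp (-(α*γ*n/r)) - (1 - γ/r) * Real.exp (-(α*γ*(n-1)/(r-1))) := by
    rw [hEeq]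
    nlinarith [mul_le_mul_of_nonneg_left h1 hE'pos.le]
  have hB : (1 - α*γ*(n-1)/(r-1)) * (γ/r - α*γ*((r-n)/(r*(r-1)))) ≤
      Real.exp (-(α*γ*(n-1)/(r-1))) * (γ/r - α*γ*((r-n)/(r*(r-1)))) :=
    mul_le_mul_of_nonneg_right hE'low hX
  have hC : (1-α)*(γ/r) ≤ (1 - α*γ*(n-1)/(r-1)) * (γ/r - α*γ*((r-n)/(r*(r-1)))) := by
    have hid : (1 - α*γ*(n-1)/(r-1)) * (γ/r - α*γ*((r-n)/(r*(r-1)))) - (1-α)*(γ/r)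
        = α*γ*((r-1)*(n-1)*(1-γ) + α*γ*(n-1)*(r-n)) / (r*(r-1)^2) := by
      field_simp; ring
    have hpos : 0 ≤ α*γ*((r-1)*(n-1)*(1-γ) + α*γ*(n-1)*(r-n)) / (r*(r-1)^2) := by
      apply div_nonneg _ (by positivity)
      have e1 : 0 ≤ (r-1)*(n-1)*(1-γ) := by
        apply mul_nonneg (mul_nonneg (by linarith) (by linarith)) (by linarith)
      have e2 : 0 ≤ α*γ*(n-1)*(r-n) := by
        apply mul_nonneg (mul_nonneg (by positivity) (by linarith)) (by linarith)
      have e3 := mul_nonneg (mul_nonneg hα0.le hγ0.le) e1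
      have e4 := mul_nonneg (mul_nonneg hα0.le hγ0.le) e2
      nlinarith [e3, e4]
    linarith [hid, hpos]
  have hkey : (1-α)*(γ/r) ≤ Real.exp (-(α*γ*n/r)) - (1 - γ/r) * Real.exp (-(α*γ*(n-1)/(r-1))) :=
    le_trans hC (le_trans hB hA)
  have hexpand : γ/r + 1/α * (1 - Real.exp (-(α*γ*(n-1)/(r-1)))) * (1 - γ/r) - 1/α * (1 - Real.exp (-(α*γ*n/r)))
      = 1/α * (Real.exp (-(α*γ*n/r)) - (1 - γ/r) * Real.exp (-(α*γ*(n-1)/(r-1))) - (1-α)*(γ/r)) := by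
    field_simp; ring
  have h0 : 0 ≤ 1/α * (Real.exp (-(α*γ*n/r)) - (1 - γ/r) * Real.exp (-(α*γ*(n-1)/(r-1))) - (1-α)*(γ/r)) :=
    mul_nonneg (by positivity) (by linarith)
  linarith [hexpand, h0]
/-- Bian et al. (2017): greedy guarantee for maximizing a nonnegative, nondecreasing,
normalized set function with submodularity ratio at least `γ` and curvature at most `α`:
the greedy solution achieves at least a `(1/α)·(1 - e^{-αγ})` fraction of the optimum. -/
theorem greedy_nonsubmodular_bound
    {V : Type*} [Fintype V] [DecidableEq V]
    (f : Finset V → ℝ)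
    (hnonneg : ∀ A : Finset V, 0 ≤ f A)
    (hnorm : f ∅ = 0)
    (hmono : ∀ (A : Finset V) (s : V), f (insert s A) ≥ f A)
    (γ α : ℝ) (hγ0 : 0 < γ) (hγ1 : γ ≤ 1) (hα0 : 0 < α) (hα1 : α ≤ 1)
    (hratio : ∀ Ω S : Finset V,
      ∑ ω ∈ Ω \ S, (f (insert ω S) - f S) ≥ γ * (f (S ∪ Ω) - f S))
    (hcurv : ∀ Ω S : Finset V, ∀ j ∈ S \ Ω,
      f (S ∪ Ω) - f ((S.erase j) ∪ Ω) ≥ (1 - α) * (f S - f (S.erase j)))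
    (k : ℕ) (hk : 0 < k)
    (S : ℕ → Finset V) (e : ℕ → V)
    (hS0 : S 0 = ∅)
    (hstep : ∀ i < k, S (i + 1) = insert (e i) (S i))
    (hmem : ∀ i < k, e i ∉ S i)
    (hgreedy : ∀ i < k, ∀ x ∉ S i,
      f (insert (e i) (S i)) - f (S i) ≥ f (insert x (S i)) - f (S i)) :
    ∀ T : Finset V, T.card ≤ k →
      f (S k) ≥ (1 / α) * (1 - Real.exp (-(α * γ))) * f T := by
  intro T hTcard
  -- chain of greedy sets is increasing
  have hchain : ∀ i, i ≤ k → ∀ j, j ≤ i → S j ⊆ S i := by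
    intro i
    induction i with
    | zero =>
      intro _ j hj
      have : j = 0 := Nat.le_zero.mp hj
      subst this; exact subset_rfl
    | succ n ih =>
      intro hik j hj
      rcases Nat.eq_or_lt_of_le hj with h | h
      · subst h; exact subset_rfl
      · have h1 : S j ⊆ S n := ih (by omega) j (by omega)
        have h2 : S n ⊆ S (n+1) := by
          rw [hstep n (by omega)]; exact Finset.subset_insert _ _
        exact h1.trans h2
  have heS : ∀ j i, j < i → i ≤ k → e j ∈ S i := by
    intro j i hji hik
    have h1 : S (j+1) ⊆ S i := hchain i hik (j+1) hji
    have h2 : e j ∈ S (j+1) := by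
      rw [hstep j (by omega)]; exact Finset.mem_insert_self _ _
    exact h1 h2
  have hρnn : ∀ j, j < k → (0:ℝ) ≤ f (S (j+1)) - f (S j) := by
    intro j hj
    rw [hstep j hj]
    linarith [hmono (S j) (e j)]
  have htel : ∀ i, (∑ j ∈ Finset.range i, (f (S (j+1)) - f (S j))) = f (S i) := by
    intro i
    rw [Finset.sum_range_sub (fun j => f (S j)), hS0, hnorm, sub_zero]
  set c : ℕ → ℝ := fun j => if e j ∈ T then (1:ℝ) else α with hc
  set m : ℕ → ℕ := fun i => ((Finset.range i).filter (fun j => e j ∈ T)).card with hm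
  set D : ℕ → ℝ := fun i => f T - ∑ j ∈ Finset.range i, c j * (f (S (j+1)) - f (S j)) with hD
  have hmle : ∀ i, m i ≤ i := by
    intro i
    simp only [hm]
    exact le_trans (Finset.card_filter_le _ _) (le_of_eq (Finset.card_range i))
  have hmsucc : ∀ i, m (i+1) = if e i ∈ T then m i + 1 else m i := by
    intro i
    simp only [hm]
    rw [Finset.range_add_one, Finset.filter_insert]
    by_cases h : e i ∈ T
    · rw [if_pos h, if_pos h, Finset.card_insert_of_notMem (by simp)]
    · rw [if_neg h, if_neg h]
  have hDsucc : ∀ i, D (i+1) = D i - c i * (f (S (i+1)) - f (S i)) := by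
    intro i
    simp only [hD]
    rw [Finset.sum_range_succ]
    ring
  -- curvature telescoping
  have hcurvtel : ∀ i, i ≤ k →
      f T + (1-α) * ∑ j ∈ (Finset.range i).filter (fun j => e j ∉ T), (f (S (j+1)) - f (S j))
        ≤ f (S i ∪ T) := by
    intro i
    induction i with
    | zero => intro _; simp [hS0]
    | succ n ih =>
      intro hik
      have hnk : n < k := by omega
      have hPrev := ih (by omega)
      by_cases he : e n ∈ T
      · have huni : S (n+1) ∪ T = S n ∪ T := by
          rw [hstep n hnk, Finset.insert_union,
            Finset.insert_eq_self.mpr (Finset.mem_union_right _ he)]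
        have hfilter : (Finset.range (n+1)).filter (fun j => e j ∉ T)
            = (Finset.range n).filter (fun j => e j ∉ T) := by
          rw [Finset.range_add_one, Finset.filter_insert, if_neg (not_not.mpr he)]
        rw [huni, hfilter]
        exact hPrev
      · have hj : e n ∈ (insert (e n) (S n)) \ T :=
          Finset.mem_sdiff.mpr ⟨Finset.mem_insert_self _ _, he⟩
        have hcv := hcurv T (insert (e n) (S n)) (e n) hj
        rw [Finset.erase_insert (hmem n hnk)] at hcv
        rw [← hstep n hnk] at hcv
        have hfilter : (Finset.range (n+1)).filter (fun j => e j ∉ T)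
            = insert n ((Finset.range n).filter (fun j => e j ∉ T)) := by
          rw [Finset.range_add_one, Finset.filter_insert, if_pos he]
        have hnotmem : n ∉ (Finset.range n).filter (fun j => e j ∉ T) := by simp
        rw [hfilter, Finset.sum_insert hnotmem, mul_add]
        linarith [hPrev, hcv]
  -- D i lower-bounds the remaining gap
  have hDle : ∀ i, i ≤ k → D i ≤ f (S i ∪ T) - f (S i) := by
    intro i hik
    have h5 := hcurvtel i hik
    have hsρ := Finset.sum_filter_add_sum_filter_not (Finset.range i) (fun j => e j ∈ T)
      (fun j => f (S (j+1)) - f (S j))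
    have hsc : ∑ j ∈ Finset.range i, c j * (f (S (j+1)) - f (S j))
        = (∑ j ∈ (Finset.range i).filter (fun j => e j ∈ T), (f (S (j+1)) - f (S j)))
          + α * ∑ j ∈ (Finset.range i).filter (fun j => ¬ e j ∈ T), (f (S (j+1)) - f (S j)) := by
      rw [← Finset.sum_filter_add_sum_filter_not (Finset.range i) (fun j => e j ∈ T)
        (fun j => c j * (f (S (j+1)) - f (S j)))]
      congr 1
      · refine Finset.sum_congr rfl fun j hj => ?_
        have hjT := (Finset.mem_filter.mp hj).2
        simp only [hc]
        rw [if_pos hjT, one_mul]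
      · rw [Finset.mul_sum]
        refine Finset.sum_congr rfl fun j hj => ?_
        have hjT := (Finset.mem_filter.mp hj).2
        simp only [hc]
        rw [if_neg hjT]
    have htl := htel i
    simp only [hD]
    rw [hsc]
    rw [sub_mul, one_mul] at h5
    linarith [h5, hsρ, htl]
  -- cardinality bound
  have hcardN : ∀ i, i < k → (T \ S i).card + m i ≤ k := by
    intro i hik
    have h1 : m i ≤ (T ∩ S i).card := by
      simp only [hm]
      apply Finset.card_le_card_of_injOn e
      · intro j hj
        have hj' := Finset.mem_filter.mp hj
        exact Finset.mem_inter.mpr ⟨hj'.2, heS j i (Finset.mem_range.mp hj'.1) hik.le⟩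
      · intro a ha b hb hab
        simp only [Finset.coe_filter, Set.mem_setOf_eq, Finset.mem_range] at ha hb
        by_contra hne
        rcases Nat.lt_or_ge a b with h | h
        · have h1 : e a ∈ S b := heS a b h (by omega)
          have h2 : e b ∉ S b := hmem b (by omega)
          rw [hab] at h1; exact h2 h1
        · have h' : b < a := by omega
          have h1 : e b ∈ S a := heS b a h' (by omega)
          have h2 : e a ∉ S a := hmem a (by omega)
          rw [← hab] at h1; exact h2 h1
    have h2 : (T \ S i).card + (T ∩ S i).card = T.card :=
      Finset.card_sdiff_add_card_inter T (S i)
    omega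
  -- key per-step inequality
  have hkey : ∀ i, i < k →
      γ * D i ≤ ((k:ℝ) - ((m i : ℕ) : ℝ)) * (f (S (i+1)) - f (S i)) := by
    intro i hik
    have hub : ∀ ω ∈ T \ S i, f (insert ω (S i)) - f (S i) ≤ f (S (i+1)) - f (S i) := by
      intro ω hω
      rw [hstep i hik]
      exact hgreedy i hik ω (Finset.mem_sdiff.mp hω).2
    have hsum := Finset.sum_le_card_nsmul (T \ S i) _ _ hub
    rw [nsmul_eq_mul] at hsum
    have hrt := hratio T (S i)
    have hDle' := hDle i hik.le
    have hρ := hρnn i hik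
    have hcN := hcardN i hik
    have hcR : ((T \ S i).card : ℝ) ≤ (k:ℝ) - ((m i : ℕ) : ℝ) := by
      have : ((T \ S i).card : ℝ) + ((m i : ℕ) : ℝ) ≤ (k:ℝ) := by exact_mod_cast hcN
      linarith
    have h1 : γ * D i ≤ γ * (f (S i ∪ T) - f (S i)) :=
      mul_le_mul_of_nonneg_left hDle' hγ0.le
    have h2 : ((T \ S i).card : ℝ) * (f (S (i+1)) - f (S i))
        ≤ ((k:ℝ) - ((m i : ℕ) : ℝ)) * (f (S (i+1)) - f (S i)) :=
      mul_le_mul_of_nonneg_right hcR hρ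
    linarith [hrt, hsum, h1, h2]
  -- the backward induction
  have hDP : ∀ d : ℕ, ∀ i : ℕ, i ≤ k → k - i = d →
      1/α * (1 - Real.exp (-(α * γ * ((k:ℝ) - ((i:ℕ):ℝ)) / ((k:ℝ) - ((m i : ℕ):ℝ))))) * D i
        ≤ ∑ j ∈ Finset.Ico i k, (f (S (j+1)) - f (S j)) := by
    intro d
    induction d with
    | zero =>
      intro i hik hd
      have : i = k := by omega
      subst this
      simp [Finset.Ico_self, sub_self, Real.exp_zero]
    | succ d ih =>
      intro i hik hd
      have hik' : i < k := by omega
      have hmlei := hmle i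
      have hrat := hkey i hik'
      have hρnn' := hρnn i hik'
      have hsum : ∑ j ∈ Finset.Ico i k, (f (S (j+1)) - f (S j))
          = (f (S (i+1)) - f (S i)) + ∑ j ∈ Finset.Ico (i+1) k, (f (S (j+1)) - f (S j)) :=
        Finset.sum_eq_sum_Ico_succ_bot hik' (fun j => f (S (j+1)) - f (S j))
      have hIH := ih (i+1) (by omega) (by omega)
      set nR : ℝ := (k:ℝ) - ((i:ℕ):ℝ) with hnR
      set rR : ℝ := (k:ℝ) - ((m i : ℕ):ℝ) with hrR
      have hn1 : 1 ≤ nR := by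
        rw [hnR]
        have : ((i:ℝ)) + 1 ≤ (k:ℝ) := by exact_mod_cast hik'
        linarith
      have hr1 : 1 ≤ rR := by
        rw [hrR]
        have : m i + 1 ≤ k := by omega
        have : ((m i : ℕ):ℝ) + 1 ≤ (k:ℝ) := by exact_mod_cast this
        linarith
      have hnr : nR ≤ rR := by
        rw [hnR, hrR]
        have : ((m i : ℕ):ℝ) ≤ ((i:ℕ):ℝ) := by exact_mod_cast hmlei
        linarith
      have hsnn : 0 ≤ ∑ j ∈ Finset.Ico i k, (f (S (j+1)) - f (S j)) :=
        Finset.sum_nonneg fun j hj => hρnn j (Finset.mem_Ico.mp hj).2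
      have ecast1 : ((k:ℝ) - (((i+1:ℕ)):ℝ)) = nR - 1 := by
        rw [hnR]; push_cast; ring
      rcases le_or_gt (D i) 0 with hDi | hDi
      · have hψ : 0 ≤ 1/α * (1 - Real.exp (-(α * γ * nR / rR))) :=
          psi_nonneg' hα0 hγ0.le (by linarith) (by linarith)
        have hprod : 1/α * (1 - Real.exp (-(α * γ * nR / rR))) * D i ≤ 0 :=
          mul_nonpos_iff.mpr (Or.inl ⟨hψ, hDi⟩)
        linarith [hprod, hsnn]
      · have hρge : γ * D i / rR ≤ f (S (i+1)) - f (S i) := by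
          rw [div_le_iff₀ (by linarith : (0:ℝ) < rR)]
          linarith [hrat]
        by_cases he : e i ∈ T
        · -- step on an element of T
          have hm1 : m (i+1) = m i + 1 := by rw [hmsucc i, if_pos he]
          rw [hm1] at hIH
          have ecast2 : ((k:ℝ) - (((m i + 1 : ℕ)):ℝ)) = rR - 1 := by
            rw [hrR]; push_cast; ring
          rw [ecast1, ecast2] at hIH
          have hDs : D (i+1) = D i - (f (S (i+1)) - f (S i)) := by
            rw [hDsucc i]
            simp only [hc]
            rw [if_pos he, one_mul]
          rw [hDs] at hIH
          set Ψ' : ℝ := 1/α * (1 - Real.exp (-(α * γ * (nR-1) / (rR-1)))) with hΨ'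
          have hΨ'0 : 0 ≤ Ψ' := psi_nonneg' hα0 hγ0.le (by linarith) (by linarith)
          have hΨ'1 : Ψ' ≤ 1 := psi_le_one' hα0 hγ0 hγ1 (by linarith) (by linarith)
          have hstepineq : 1/α * (1 - Real.exp (-(α * γ * nR / rR))) ≤ γ/rR + Ψ' * (1 - γ/rR) := by
            rcases Nat.eq_zero_or_pos d with hd0 | hd0
            · have hnR1 : nR = 1 := by
                rw [hnR]
                have : k = i + 1 := by omega
                rw [this]; push_cast; ring
              have hΨ'z : Ψ' = 0 := by
                rw [hΨ', hnR1]
                norm_num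
              rw [hΨ'z, hnR1]
              have := stepn1' (γ := γ) hα0 (show (0:ℝ) < rR by linarith)
              linarith [this]
            · have hnR2 : 2 ≤ nR := by
                rw [hnR]
                have : i + 2 ≤ k := by omega
                have : ((i:ℝ)) + 2 ≤ (k:ℝ) := by exact_mod_cast this
                linarith
              exact step1' hα0 hα1 hγ0 hγ1 (by linarith) hnr (by linarith)
          have t1 : (γ * D i / rR) * (1 - Ψ') ≤ (f (S (i+1)) - f (S i)) * (1 - Ψ') :=
            mul_le_mul_of_nonneg_right hρge (by linarith)
          have t2 : 1/α * (1 - Real.exp (-(α * γ * nR / rR))) * D i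
              ≤ (γ/rR + Ψ' * (1 - γ/rR)) * D i :=
            mul_le_mul_of_nonneg_right hstepineq hDi.le
          have t3 : (γ/rR + Ψ' * (1 - γ/rR)) * D i
              = (γ * D i / rR) * (1 - Ψ') + Ψ' * (D i - (f (S (i+1)) - f (S i)))
                + (f (S (i+1)) - f (S i)) * Ψ' := by ring
          rw [hsum]
          clear_value nR rR Ψ'
          set Ssum : ℝ := ∑ j ∈ Finset.Ico (i+1) k, (f (S (j+1)) - f (S j)) with hSsum
          set rhoi : ℝ := f (S (i+1)) - f (S i) with hrhoi
          set Di : ℝ := D i with hDi2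
          set E : ℝ := Real.exp (-(α * γ * nR / rR)) with hE2
          clear_value Ssum rhoi Di E
          linarith [hIH, t1, t2, t3]
        · -- step on an element outside T
          have hm1 : m (i+1) = m i := by rw [hmsucc i, if_neg he]
          rw [hm1] at hIH
          rw [ecast1] at hIH
          have hDs : D (i+1) = D i - α * (f (S (i+1)) - f (S i)) := by
            rw [hDsucc i]
            simp only [hc]
            rw [if_neg he]
          rw [hDs] at hIH
          set Ψ' : ℝ := 1/α * (1 - Real.exp (-(α * γ * (nR-1) / rR))) with hΨ'
          have hΨ'0 : 0 ≤ Ψ' := psi_nonneg' hα0 hγ0.le (by linarith) (by linarith)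
          have hαΨ' : α * Ψ' = 1 - Real.exp (-(α * γ * (nR-1) / rR)) := by
            rw [hΨ']; field_simp
          have hcoef : 0 ≤ 1 - α * Ψ' := by
            have := (Real.exp_pos (-(α * γ * (nR-1) / rR))).le
            linarith [hαΨ']
          have hstepineq : 1/α * (1 - Real.exp (-(α * γ * nR / rR)))
              ≤ γ/rR + Ψ' * (1 - α*(γ/rR)) := step2' hα0 hγ0 hr1
          have t1 : (γ * D i / rR) * (1 - α * Ψ') ≤ (f (S (i+1)) - f (S i)) * (1 - α * Ψ') :=
            mul_le_mul_of_nonneg_right hρge hcoef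
          have t2 : 1/α * (1 - Real.exp (-(α * γ * nR / rR))) * D i
              ≤ (γ/rR + Ψ' * (1 - α*(γ/rR))) * D i :=
            mul_le_mul_of_nonneg_right hstepineq hDi.le
          have t3 : (γ/rR + Ψ' * (1 - α*(γ/rR))) * D i
              = (γ * D i / rR) * (1 - α * Ψ') + Ψ' * (D i - α * (f (S (i+1)) - f (S i)))
                + α * (f (S (i+1)) - f (S i)) * Ψ' := by ring
          rw [hsum]
          clear_value nR rR Ψ'
          set Ssum : ℝ := ∑ j ∈ Finset.Ico (i+1) k, (f (S (j+1)) - f (S j)) with hSsum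
          set rhoi : ℝ := f (S (i+1)) - f (S i) with hrhoi
          set Di : ℝ := D i with hDi2
          set E : ℝ := Real.exp (-(α * γ * nR / rR)) with hE2
          clear_value Ssum rhoi Di E
          linarith [hIH, t1, t2, t3]
  -- conclude
  have hmain := hDP k 0 (Nat.zero_le k) (by omega)
  have hm0 : m 0 = 0 := by simp [hm]
  have hD0 : D 0 = f T := by simp [hD]
  rw [hm0, hD0] at hmain
  simp only [Nat.cast_zero, sub_zero] at hmain
  rw [mul_div_assoc, div_self (show ((k:ℕ):ℝ) ≠ 0 from Nat.cast_ne_zero.mpr hk.ne'), mul_one] at hmain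
  rw [← Finset.range_eq_Ico, htel k] at hmain
  exact hmain
end

section
/- Let V be a nonempty finite index set and for each ω ∈ V let W_ω be an n×n real symmetric positive semidefinite matrix; set W_S := ∑_{ω ∈ S} W_ω and f(S) := λ_n(W_S). Assume max_{ω ∈ V} λ_1(W_ω) > 0 and let γ₀ := (min_{ω ∈ V} λ_n(W_ω)) / (max_{ω ∈ V} λ_1(W_ω)). Then for all Ω, S ⊆ V: ∑_{ω ∈ Ω \ S} [f(S ∪ {ω}) − f(S)] ≥ γ₀ · [f(S ∪ Ω) − f(S)]. In particular, the submodularity ratio of f is at least γ₀. -/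
open Classical in
/-- Smallest eigenvalue of a real symmetric matrix (junk value `0` if not symmetric). -/
noncomputable def lambdaMin {n : ℕ} (M : Matrix (Fin n) (Fin n) ℝ) : ℝ :=
  if h : M.IsHermitian then ⨅ i, h.eigenvalues i else 0

open Classical in
/-- Largest eigenvalue of a real symmetric matrix (junk value `0` if not symmetric). -/
noncomputable def lambdaMax {n : ℕ} (M : Matrix (Fin n) (Fin n) ℝ) : ℝ :=
  if h : M.IsHermitian then ⨆ i, h.eigenvalues i else 0

section Aux

open Matrix

variable {n : ℕ}

private lemma lambdaMin_eq {M : Matrix (Fin n) (Fin n) ℝ} (hM : M.IsHermitian) :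
    lambdaMin M = ⨅ i, hM.eigenvalues i := dif_pos hM

private lemma lambdaMax_eq {M : Matrix (Fin n) (Fin n) ℝ} (hM : M.IsHermitian) :
    lambdaMax M = ⨆ i, hM.eigenvalues i := dif_pos hM

private lemma lambdaMin_le {M : Matrix (Fin n) (Fin n) ℝ} (hM : M.IsHermitian) (i : Fin n) :
    lambdaMin M ≤ hM.eigenvalues i := by
  rw [lambdaMin_eq hM]
  exact ciInf_le (Set.finite_range _).bddBelow i

private lemma le_lambdaMax {M : Matrix (Fin n) (Fin n) ℝ} (hM : M.IsHermitian) (i : Fin n) :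
    hM.eigenvalues i ≤ lambdaMax M := by
  rw [lambdaMax_eq hM]
  exact le_ciSup (Set.finite_range _).bddAbove i

private lemma le_lambdaMin (hn : 0 < n) {M : Matrix (Fin n) (Fin n) ℝ} (hM : M.IsHermitian)
    {c : ℝ} (h : ∀ i, c ≤ hM.eigenvalues i) : c ≤ lambdaMin M := by
  haveI : Nonempty (Fin n) := ⟨⟨0, hn⟩⟩
  rw [lambdaMin_eq hM]
  exact le_ciInf h

private lemma lambdaMax_le (hn : 0 < n) {M : Matrix (Fin n) (Fin n) ℝ} (hM : M.IsHermitian)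
    {c : ℝ} (h : ∀ i, hM.eigenvalues i ≤ c) : lambdaMax M ≤ c := by
  haveI : Nonempty (Fin n) := ⟨⟨0, hn⟩⟩
  rw [lambdaMax_eq hM]
  exact ciSup_le h

private lemma psd_smul_one_sub {M : Matrix (Fin n) (Fin n) ℝ} (hM : M.IsHermitian) {c : ℝ}
    (h : ∀ i, hM.eigenvalues i ≤ c) : (c • (1 : Matrix (Fin n) (Fin n) ℝ) - M).PosSemidef := by
  have hU : (hM.eigenvectorUnitary : Matrix (Fin n) (Fin n) ℝ) *
      star (hM.eigenvectorUnitary : Matrix (Fin n) (Fin n) ℝ) = 1 :=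
    (Matrix.mem_unitaryGroup_iff).mp (hM.eigenvectorUnitary).2
  have key : c • (1 : Matrix (Fin n) (Fin n) ℝ) - M
      = (hM.eigenvectorUnitary : Matrix (Fin n) (Fin n) ℝ) *
        diagonal (fun i => c - hM.eigenvalues i) *
        star (hM.eigenvectorUnitary : Matrix (Fin n) (Fin n) ℝ) := by
    have hd : diagonal (fun i => c - hM.eigenvalues i)
        = c • (1 : Matrix (Fin n) (Fin n) ℝ) - diagonal (RCLike.ofReal ∘ hM.eigenvalues) := by
      ext i j
      by_cases hij : i = j <;> simp [hij, diagonal, Matrix.one_apply]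
    rw [hd, Matrix.mul_sub, Matrix.sub_mul]
    rw [show (hM.eigenvectorUnitary : Matrix (Fin n) (Fin n) ℝ) *
        (c • (1 : Matrix (Fin n) (Fin n) ℝ)) *
        star (hM.eigenvectorUnitary : Matrix (Fin n) (Fin n) ℝ)
        = c • (1 : Matrix (Fin n) (Fin n) ℝ) by
      rw [Matrix.mul_smul, Matrix.mul_one, Matrix.smul_mul, hU]]
    congr 1; exact hM.spectral_theorem
  rw [key, Matrix.star_eq_conjTranspose]
  exact (Matrix.PosSemidef.diagonal (fun i => sub_nonneg.2 (h i))).mul_mul_conjTranspose_same _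

private lemma psd_sub_smul_one {M : Matrix (Fin n) (Fin n) ℝ} (hM : M.IsHermitian) {c : ℝ}
    (h : ∀ i, c ≤ hM.eigenvalues i) : (M - c • (1 : Matrix (Fin n) (Fin n) ℝ)).PosSemidef := by
  have hU : (hM.eigenvectorUnitary : Matrix (Fin n) (Fin n) ℝ) *
      star (hM.eigenvectorUnitary : Matrix (Fin n) (Fin n) ℝ) = 1 :=
    (Matrix.mem_unitaryGroup_iff).mp (hM.eigenvectorUnitary).2
  have key : M - c • (1 : Matrix (Fin n) (Fin n) ℝ)
      = (hM.eigenvectorUnitary : Matrix (Fin n) (Fin n) ℝ) *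
        diagonal (fun i => hM.eigenvalues i - c) *
        star (hM.eigenvectorUnitary : Matrix (Fin n) (Fin n) ℝ) := by
    have hd : diagonal (fun i => hM.eigenvalues i - c)
        = diagonal (RCLike.ofReal ∘ hM.eigenvalues) - c • (1 : Matrix (Fin n) (Fin n) ℝ) := by
      ext i j
      by_cases hij : i = j <;> simp [hij, diagonal, Matrix.one_apply]
    rw [hd, Matrix.mul_sub, Matrix.sub_mul]
    rw [show (hM.eigenvectorUnitary : Matrix (Fin n) (Fin n) ℝ) *
        (c • (1 : Matrix (Fin n) (Fin n) ℝ)) *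
        star (hM.eigenvectorUnitary : Matrix (Fin n) (Fin n) ℝ)
        = c • (1 : Matrix (Fin n) (Fin n) ℝ) by
      rw [Matrix.mul_smul, Matrix.mul_one, Matrix.smul_mul, hU]]
    congr 1; exact hM.spectral_theorem
  rw [key, Matrix.star_eq_conjTranspose]
  exact (Matrix.PosSemidef.diagonal (fun i => sub_nonneg.2 (h i))).mul_mul_conjTranspose_same _

private lemma psd_sub_lambdaMin {M : Matrix (Fin n) (Fin n) ℝ} (hM : M.IsHermitian) :
    (M - lambdaMin M • (1 : Matrix (Fin n) (Fin n) ℝ)).PosSemidef :=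
  psd_sub_smul_one hM (lambdaMin_le hM)

private lemma psd_lambdaMax_sub {M : Matrix (Fin n) (Fin n) ℝ} (hM : M.IsHermitian) :
    (lambdaMax M • (1 : Matrix (Fin n) (Fin n) ℝ) - M).PosSemidef :=
  psd_smul_one_sub hM (le_lambdaMax hM)

private lemma rayleigh_lower {M : Matrix (Fin n) (Fin n) ℝ} (hM : M.IsHermitian)
    {v : Fin n → ℝ} (hv : dotProduct (star v) v = 1) :
    lambdaMin M ≤ dotProduct (star v) (M *ᵥ v) := by
  have h0 := (psd_sub_lambdaMin hM).dotProduct_mulVec_nonneg v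
  rw [Matrix.sub_mulVec, dotProduct_sub, Matrix.smul_mulVec,
    Matrix.one_mulVec, dotProduct_smul, hv] at h0
  simpa using sub_nonneg.mp h0

private lemma rayleigh_upper {M : Matrix (Fin n) (Fin n) ℝ} (hM : M.IsHermitian)
    {v : Fin n → ℝ} (hv : dotProduct (star v) v = 1) :
    dotProduct (star v) (M *ᵥ v) ≤ lambdaMax M := by
  have h0 := (psd_lambdaMax_sub hM).dotProduct_mulVec_nonneg v
  rw [Matrix.sub_mulVec, dotProduct_sub, Matrix.smul_mulVec,
    Matrix.one_mulVec, dotProduct_smul, hv] at h0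
  simpa using sub_nonneg.mp h0

private lemma eigenvectorBasis_dot {M : Matrix (Fin n) (Fin n) ℝ} (hM : M.IsHermitian)
    (i : Fin n) :
    dotProduct (star ⇑(hM.eigenvectorBasis i)) ⇑(hM.eigenvectorBasis i) = 1 := by
  have h1 : ‖hM.eigenvectorBasis i‖ = 1 := hM.eigenvectorBasis.orthonormal.1 i
  have := EuclideanSpace.inner_eq_star_dotProduct (𝕜 := ℝ)
    (hM.eigenvectorBasis i) (hM.eigenvectorBasis i)
  rw [real_inner_self_eq_norm_sq, h1] at this
  simpa using this.symm

private lemma le_eig_of_psd {M : Matrix (Fin n) (Fin n) ℝ} (hM : M.IsHermitian) {c : ℝ}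
    (hP : (M - c • (1 : Matrix (Fin n) (Fin n) ℝ)).PosSemidef) (i : Fin n) :
    c ≤ hM.eigenvalues i := by
  have h0 := hP.dotProduct_mulVec_nonneg ⇑(hM.eigenvectorBasis i)
  rw [Matrix.sub_mulVec, dotProduct_sub, hM.mulVec_eigenvectorBasis,
    Matrix.smul_mulVec, Matrix.one_mulVec, dotProduct_smul,
    dotProduct_smul, eigenvectorBasis_dot hM i] at h0
  simpa using sub_nonneg.mp h0

private lemma eig_le_of_psd {M : Matrix (Fin n) (Fin n) ℝ} (hM : M.IsHermitian) {c : ℝ}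
    (hP : (c • (1 : Matrix (Fin n) (Fin n) ℝ) - M).PosSemidef) (i : Fin n) :
    hM.eigenvalues i ≤ c := by
  have h0 := hP.dotProduct_mulVec_nonneg ⇑(hM.eigenvectorBasis i)
  rw [Matrix.sub_mulVec, dotProduct_sub, hM.mulVec_eigenvectorBasis,
    Matrix.smul_mulVec, Matrix.one_mulVec, dotProduct_smul,
    dotProduct_smul, eigenvectorBasis_dot hM i] at h0
  simpa using sub_nonneg.mp h0

private lemma le_lambdaMin_of_psd (hn : 0 < n) {M : Matrix (Fin n) (Fin n) ℝ}
    (hM : M.IsHermitian) {c : ℝ}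
    (hP : (M - c • (1 : Matrix (Fin n) (Fin n) ℝ)).PosSemidef) : c ≤ lambdaMin M :=
  le_lambdaMin hn hM fun i => le_eig_of_psd hM hP i

private lemma lambdaMax_le_of_psd (hn : 0 < n) {M : Matrix (Fin n) (Fin n) ℝ}
    (hM : M.IsHermitian) {c : ℝ}
    (hP : (c • (1 : Matrix (Fin n) (Fin n) ℝ) - M).PosSemidef) : lambdaMax M ≤ c :=
  lambdaMax_le hn hM fun i => eig_le_of_psd hM hP i

private lemma lambdaMin_add_ge (hn : 0 < n) {A B : Matrix (Fin n) (Fin n) ℝ}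
    (hA : A.IsHermitian) (hB : B.IsHermitian) :
    lambdaMin A + lambdaMin B ≤ lambdaMin (A + B) := by
  apply le_lambdaMin_of_psd hn (hA.add hB)
  have hsplit : A + B - (lambdaMin A + lambdaMin B) • (1 : Matrix (Fin n) (Fin n) ℝ)
      = (A - lambdaMin A • 1) + (B - lambdaMin B • 1) := by
    rw [add_smul]; abel
  rw [hsplit]
  exact (psd_sub_lambdaMin hA).add (psd_sub_lambdaMin hB)

private lemma lambdaMin_add_le (hn : 0 < n) {A B : Matrix (Fin n) (Fin n) ℝ}
    (hA : A.IsHermitian) (hB : B.IsHermitian) :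
    lambdaMin (A + B) ≤ lambdaMin A + lambdaMax B := by
  haveI : Nonempty (Fin n) := ⟨⟨0, hn⟩⟩
  obtain ⟨i, hi⟩ := Finite.exists_min hA.eigenvalues
  have hmin : lambdaMin A = hA.eigenvalues i :=
    le_antisymm (lambdaMin_le hA i) (le_lambdaMin hn hA hi)
  set v : Fin n → ℝ := ⇑(hA.eigenvectorBasis i) with hv
  have hdot : dotProduct (star v) v = 1 := eigenvectorBasis_dot hA i
  have h1 : lambdaMin (A + B) ≤ dotProduct (star v) ((A + B) *ᵥ v) :=
    rayleigh_lower (hA.add hB) hdot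
  have h2 : dotProduct (star v) (A *ᵥ v) = hA.eigenvalues i := by
    rw [hA.mulVec_eigenvectorBasis, dotProduct_smul, hdot]
    simp
  have h3 : dotProduct (star v) (B *ᵥ v) ≤ lambdaMax B := rayleigh_upper hB hdot
  rw [Matrix.add_mulVec, dotProduct_add, h2] at h1
  rw [hmin]
  linarith

private lemma psd_sum {ι : Type*} (s : Finset ι) (f : ι → Matrix (Fin n) (Fin n) ℝ)
    (h : ∀ i ∈ s, (f i).PosSemidef) : (∑ i ∈ s, f i).PosSemidef :=
  Finset.sum_induction f _ (fun _ _ ha hb => ha.add hb) Matrix.PosSemidef.zero h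

private lemma lambdaMax_sum_le (hn : 0 < n) {ι : Type*} (s : Finset ι)
    (f : ι → Matrix (Fin n) (Fin n) ℝ) (h : ∀ i, (f i).PosSemidef) :
    lambdaMax (∑ i ∈ s, f i) ≤ ∑ i ∈ s, lambdaMax (f i) := by
  apply lambdaMax_le_of_psd hn (psd_sum s f fun i _ => h i).1
  have hsplit : (∑ i ∈ s, lambdaMax (f i)) • (1 : Matrix (Fin n) (Fin n) ℝ) - ∑ i ∈ s, f i
      = ∑ i ∈ s, (lambdaMax (f i) • (1 : Matrix (Fin n) (Fin n) ℝ) - f i) := by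
    rw [Finset.sum_sub_distrib, Finset.sum_smul]
  rw [hsplit]
  exact psd_sum s _ fun i _ => psd_lambdaMax_sub (h i).1

end Aux

/-- Lower bound `γ₀ = min_ω λ_min(W_ω) / max_ω λ_max(W_ω)` on the submodularity ratio of
the set function `S ↦ λ_min(W_S)` with `W_S = ∑_{ω ∈ S} W_ω`. -/
theorem lambdaMin_gramian_submodularity_ratio
    {n : ℕ} (hn : 0 < n) {V : Type*} [Fintype V] [DecidableEq V] [Nonempty V]
    (W : V → Matrix (Fin n) (Fin n) ℝ) (hW : ∀ ω, (W ω).PosSemidef)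
    (hmax : 0 < ⨆ ω : V, lambdaMax (W ω)) :
    ∀ Ω S : Finset V,
      ∑ ω ∈ Ω \ S, (lambdaMin (∑ i ∈ insert ω S, W i) - lambdaMin (∑ i ∈ S, W i)) ≥
        ((⨅ ω : V, lambdaMin (W ω)) / (⨆ ω : V, lambdaMax (W ω))) *
          (lambdaMin (∑ i ∈ S ∪ Ω, W i) - lambdaMin (∑ i ∈ S, W i)) := by
  intro Ω S
  set m := ⨅ ω : V, lambdaMin (W ω) with hm
  set Mx := ⨆ ω : V, lambdaMax (W ω) with hMx
  have hpsd : ∀ T : Finset V, (∑ i ∈ T, W i).PosSemidef :=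
    fun T => psd_sum T W fun i _ => hW i
  have hm_nonneg : 0 ≤ m :=
    le_ciInf fun ω => le_lambdaMin hn (hW ω).1 fun i => (hW ω).eigenvalues_nonneg i
  have hγ : 0 ≤ m / Mx := div_nonneg hm_nonneg hmax.le
  have hm_le : ∀ ω, m ≤ lambdaMin (W ω) := fun ω => ciInf_le (Set.finite_range _).bddBelow ω
  have hMx_le : ∀ ω, lambdaMax (W ω) ≤ Mx := fun ω => by
    rw [hMx]; exact le_ciSup (Set.finite_range fun ω : V => lambdaMax (W ω)).bddAbove ω
  set T := Ω \ S with hT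
  -- Lower bound for the left-hand side.
  have hLHS : (T.card : ℝ) * m ≤
      ∑ ω ∈ T, (lambdaMin (∑ i ∈ insert ω S, W i) - lambdaMin (∑ i ∈ S, W i)) := by
    calc (T.card : ℝ) * m = ∑ _ω ∈ T, m := by
          rw [Finset.sum_const, nsmul_eq_mul]
      _ ≤ _ := by
          refine Finset.sum_le_sum fun ω hω => ?_
          have hωS : ω ∉ S := (Finset.mem_sdiff.mp hω).2
          rw [Finset.sum_insert hωS]
          have hadd := lambdaMin_add_ge hn (hW ω).1 (hpsd S).1
          have := hm_le ω
          linarith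
  -- Upper bound for the increment on the union.
  have hsplit : ∑ i ∈ S ∪ Ω, W i = ∑ i ∈ S, W i + ∑ i ∈ T, W i := by
    rw [← Finset.sum_union Finset.disjoint_sdiff, Finset.union_sdiff_self_eq_union]
  have hRHS1 : lambdaMin (∑ i ∈ S ∪ Ω, W i) - lambdaMin (∑ i ∈ S, W i)
      ≤ lambdaMax (∑ i ∈ T, W i) := by
    rw [hsplit]
    have := lambdaMin_add_le hn (hpsd S).1 (hpsd T).1
    linarith
  have hRHS2 : lambdaMax (∑ i ∈ T, W i) ≤ (T.card : ℝ) * Mx := by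
    refine (lambdaMax_sum_le hn T W hW).trans ?_
    calc ∑ ω ∈ T, lambdaMax (W ω) ≤ ∑ _ω ∈ T, Mx := Finset.sum_le_sum fun ω _ => hMx_le ω
      _ = (T.card : ℝ) * Mx := by rw [Finset.sum_const, nsmul_eq_mul]
  have hMxne : Mx ≠ 0 := ne_of_gt hmax
  calc (m / Mx) * (lambdaMin (∑ i ∈ S ∪ Ω, W i) - lambdaMin (∑ i ∈ S, W i))
      ≤ (m / Mx) * ((T.card : ℝ) * Mx) :=
        mul_le_mul_of_nonneg_left (hRHS1.trans hRHS2) hγ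
    _ = (T.card : ℝ) * m := by field_simp
    _ ≤ _ := hLHS
end

section
/- Let V be a finite index set, W_0 an n×n real symmetric positive definite matrix, and for each ω ∈ V let W_ω be an n×n real symmetric positive semidefinite matrix; set W̄_S := W_0 + ∑_{ω ∈ S} W_ω (which is positive definite, hence invertible). Then for every S ⊆ V and ω ∈ V \ S: tr(W̄_S^{−1}) − tr(W̄_{S ∪ {ω}}^{−1}) ≥ tr(W_ω) / λ_1(W̄_V)² ≥ 0. In particular, the set function f(S) := −tr(W̄_S^{−1}) is nondecreasing. -/
open Matrix

section AuxLemmas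

variable {n : ℕ}

private lemma aux_trace_nonneg {M : Matrix (Fin n) (Fin n) ℝ} (hM : M.PosSemidef) :
    0 ≤ M.trace := by
  rw [Matrix.trace]
  refine Finset.sum_nonneg fun i _ => ?_
  have h := hM.dotProduct_mulVec_nonneg (Pi.single i 1)
  simpa [dotProduct, Matrix.mulVec, Pi.single_apply] using h

private lemma aux_trace_mul_nonneg {A B : Matrix (Fin n) (Fin n) ℝ}
    (hA : A.PosSemidef) (hB : B.PosSemidef) : 0 ≤ (A * B).trace := by
  obtain ⟨X, hX⟩ : ∃ X : Matrix (Fin n) (Fin n) ℝ, A = star X * X := by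
    open scoped MatrixOrder Matrix.Norms.L2Operator in
    exact CStarAlgebra.nonneg_iff_eq_star_mul_self.mp hA.nonneg
  have h2 : (X * B * Xᴴ).PosSemidef := hB.mul_mul_conjTranspose_same X
  have h3 : (X * B * Xᴴ).trace = (A * B).trace := by
    rw [Matrix.trace_mul_cycle, hX, Matrix.star_eq_conjTranspose]
  calc (0:ℝ) ≤ (X * B * Xᴴ).trace := aux_trace_nonneg h2
  _ = (A * B).trace := h3

private lemma aux_conj_diag_psd (U : Matrix.unitaryGroup (Fin n) ℝ) {d : Fin n → ℝ}
    (hd : ∀ i, 0 ≤ d i) :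
    ((U : Matrix (Fin n) (Fin n) ℝ) * diagonal d * star (U : Matrix (Fin n) (Fin n) ℝ)).PosSemidef := by
  have := (Matrix.posSemidef_diagonal_iff.mpr hd).mul_mul_conjTranspose_same
    (U : Matrix (Fin n) (Fin n) ℝ)
  rwa [Matrix.star_eq_conjTranspose]

private lemma aux_smul_one_conj (U : Matrix.unitaryGroup (Fin n) ℝ) (c : ℝ) :
    c • (1 : Matrix (Fin n) (Fin n) ℝ) =
      (U : Matrix (Fin n) (Fin n) ℝ) * diagonal (fun _ => c) * star (U : Matrix (Fin n) (Fin n) ℝ) := by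
  rw [← Matrix.smul_one_eq_diagonal]
  rw [Matrix.mul_smul, Matrix.mul_one, Matrix.smul_mul]
  rw [(Matrix.mem_unitaryGroup_iff).mp U.2]

private lemma aux_conj_mul (U : Matrix.unitaryGroup (Fin n) ℝ) (A B : Matrix (Fin n) (Fin n) ℝ) :
    ((U : Matrix (Fin n) (Fin n) ℝ) * A * star (U : Matrix (Fin n) (Fin n) ℝ)) *
      ((U : Matrix (Fin n) (Fin n) ℝ) * B * star (U : Matrix (Fin n) (Fin n) ℝ)) =
    (U : Matrix (Fin n) (Fin n) ℝ) * (A * B) * star (U : Matrix (Fin n) (Fin n) ℝ) := by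
  have hUU' : star (U : Matrix (Fin n) (Fin n) ℝ) * (U : Matrix (Fin n) (Fin n) ℝ) = 1 :=
    (Matrix.mem_unitaryGroup_iff').mp U.2
  rw [Matrix.mul_assoc ((U : Matrix (Fin n) (Fin n) ℝ) * A),
    ← Matrix.mul_assoc (star (U : Matrix (Fin n) (Fin n) ℝ)) ((U : Matrix (Fin n) (Fin n) ℝ) * B),
    ← Matrix.mul_assoc (star (U : Matrix (Fin n) (Fin n) ℝ)) (U : Matrix (Fin n) (Fin n) ℝ),
    hUU', Matrix.one_mul, ← Matrix.mul_assoc ((U : Matrix (Fin n) (Fin n) ℝ) * A),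
    Matrix.mul_assoc (U : Matrix (Fin n) (Fin n) ℝ) A B]

private lemma aux_lambdaMax_psd {M : Matrix (Fin n) (Fin n) ℝ} (hM : M.IsHermitian) :
    ((lambdaMax M) • (1 : Matrix (Fin n) (Fin n) ℝ) - M).PosSemidef := by
  have hL : ∀ i, hM.eigenvalues i ≤ lambdaMax M := by
    intro i
    rw [lambdaMax, dif_pos hM]
    exact le_ciSup (Set.Finite.bddAbove (Set.finite_range _)) i
  set L := lambdaMax M with hLdef
  set U := hM.eigenvectorUnitary with hU
  have hofReal : (RCLike.ofReal ∘ hM.eigenvalues : Fin n → ℝ) = hM.eigenvalues := by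
    funext i; simp [RCLike.ofReal_real_eq_id]
  have key : L • (1 : Matrix (Fin n) (Fin n) ℝ) - M =
      (U : Matrix (Fin n) (Fin n) ℝ) * diagonal (fun i => lambdaMax M - hM.eigenvalues i) *
        star (U : Matrix (Fin n) (Fin n) ℝ) := by
    conv_lhs => rw [hM.spectral_theorem, aux_smul_one_conj U L]
    rw [Unitary.conjStarAlgAut_apply, ← hU, hofReal, ← Matrix.sub_mul, ← Matrix.mul_sub, Matrix.diagonal_sub]
  rw [key]
  exact aux_conj_diag_psd U (fun i => sub_nonneg.mpr (hL i))

private lemma aux_eig_le {Q : Matrix (Fin n) (Fin n) ℝ} (hQ : Q.IsHermitian) {L : ℝ}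
    (h : (L • (1 : Matrix (Fin n) (Fin n) ℝ) - Q).PosSemidef) (i : Fin n) :
    hQ.eigenvalues i ≤ L := by
  set v : Fin n → ℝ := ⇑(hQ.eigenvectorBasis i) with hv
  have hunit : dotProduct v v = 1 := by
    have h1 : ‖hQ.eigenvectorBasis i‖ = 1 := hQ.eigenvectorBasis.orthonormal.1 i
    have h2 : (inner ℝ (hQ.eigenvectorBasis i) (hQ.eigenvectorBasis i) : ℝ) = 1 := by
      rw [real_inner_self_eq_norm_sq, h1]; norm_num
    rw [EuclideanSpace.inner_eq_star_dotProduct] at h2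
    simpa using h2
  have h2 := h.dotProduct_mulVec_nonneg v
  rw [Matrix.sub_mulVec, Matrix.smul_mulVec, Matrix.one_mulVec] at h2
  rw [hv, hQ.mulVec_eigenvectorBasis i] at h2
  have h3 : star v = v := by funext j; simp
  rw [h3, dotProduct_sub, dotProduct_smul, dotProduct_smul] at h2
  rw [← hv] at h2
  rw [hunit] at h2
  simp only [smul_eq_mul, mul_one] at h2
  linarith

private lemma aux_inv_sq {Q : Matrix (Fin n) (Fin n) ℝ} (hQ : Q.PosDef) {L : ℝ}
    (h : (L • (1 : Matrix (Fin n) (Fin n) ℝ) - Q).PosSemidef) :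
    (Q⁻¹ * Q⁻¹ - (L ^ 2)⁻¹ • (1 : Matrix (Fin n) (Fin n) ℝ)).PosSemidef := by
  have hH := hQ.isHermitian
  set U := hH.eigenvectorUnitary with hU
  set lam := hH.eigenvalues with hlam
  have hofReal : (RCLike.ofReal ∘ lam : Fin n → ℝ) = lam := by
    funext i; simp [RCLike.ofReal_real_eq_id]
  have hUU : (U : Matrix (Fin n) (Fin n) ℝ) * star (U : Matrix (Fin n) (Fin n) ℝ) = 1 :=
    (Matrix.mem_unitaryGroup_iff).mp U.2
  have hUU' : star (U : Matrix (Fin n) (Fin n) ℝ) * (U : Matrix (Fin n) (Fin n) ℝ) = 1 :=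
    (Matrix.mem_unitaryGroup_iff').mp U.2
  have hpos : ∀ i, 0 < lam i := hQ.eigenvalues_pos
  have hspec : Q = (U : Matrix (Fin n) (Fin n) ℝ) * diagonal lam * star (U : Matrix (Fin n) (Fin n) ℝ) := by
    conv_lhs => rw [hH.spectral_theorem]
    rw [Unitary.conjStarAlgAut_apply, hofReal]
  have hinv : Q⁻¹ = (U : Matrix (Fin n) (Fin n) ℝ) * diagonal (fun i => (lam i)⁻¹) *
      star (U : Matrix (Fin n) (Fin n) ℝ) := by
    apply Matrix.inv_eq_right_inv
    rw [hspec, aux_conj_mul, Matrix.diagonal_mul_diagonal]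
    have : (fun i => lam i * (lam i)⁻¹) = fun _ : Fin n => (1:ℝ) := by
      funext i; exact mul_inv_cancel₀ (hpos i).ne'
    rw [this, Matrix.diagonal_one, Matrix.mul_one, hUU]
  have hsq : Q⁻¹ * Q⁻¹ = (U : Matrix (Fin n) (Fin n) ℝ) * diagonal (fun i => (lam i)⁻¹ * (lam i)⁻¹) *
      star (U : Matrix (Fin n) (Fin n) ℝ) := by
    rw [hinv, aux_conj_mul, Matrix.diagonal_mul_diagonal]
  have key : Q⁻¹ * Q⁻¹ - (L ^ 2)⁻¹ • (1 : Matrix (Fin n) (Fin n) ℝ) =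
      (U : Matrix (Fin n) (Fin n) ℝ) * diagonal (fun i => (lam i)⁻¹ * (lam i)⁻¹ - (L ^ 2)⁻¹) *
        star (U : Matrix (Fin n) (Fin n) ℝ) := by
    rw [hsq, aux_smul_one_conj U ((L ^ 2)⁻¹), ← Matrix.sub_mul, ← Matrix.mul_sub,
      Matrix.diagonal_sub]
  rw [key]
  refine aux_conj_diag_psd U (fun i => sub_nonneg.mpr ?_)
  have hle : lam i ≤ L := aux_eig_le hH h i
  have h1 : lam i ^ 2 ≤ L ^ 2 := by nlinarith [hpos i]
  have h2 : (L ^ 2)⁻¹ ≤ (lam i ^ 2)⁻¹ := by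
    exact inv_anti₀ (pow_pos (hpos i) 2) h1
  calc (L ^ 2)⁻¹ ≤ (lam i ^ 2)⁻¹ := h2
  _ = (lam i)⁻¹ * (lam i)⁻¹ := by rw [sq, mul_inv]

private lemma aux_resolvent {P B : Matrix (Fin n) (Fin n) ℝ} (hP : P.PosDef) (hB : B.PosSemidef)
    {L : ℝ} (h : (L • (1 : Matrix (Fin n) (Fin n) ℝ) - (P + B)).PosSemidef) :
    B.trace * (L ^ 2)⁻¹ ≤ P⁻¹.trace - (P + B)⁻¹.trace := by
  have hQ : (P + B).PosDef := hP.add_posSemidef hB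
  set C := (P + B)⁻¹ with hC
  have hPdet : IsUnit P.det := (Matrix.isUnit_iff_isUnit_det _).mp hP.isUnit
  have hQdet : IsUnit (P + B).det := (Matrix.isUnit_iff_isUnit_det _).mp hQ.isUnit
  have hPP : P⁻¹ * P = 1 := Matrix.nonsing_inv_mul P hPdet
  have hPP' : P * P⁻¹ = 1 := Matrix.mul_nonsing_inv P hPdet
  have hQC : (P + B) * C = 1 := Matrix.mul_nonsing_inv _ hQdet
  have hCQ : C * (P + B) = 1 := Matrix.nonsing_inv_mul _ hQdet
  have h1 : P⁻¹ - C = P⁻¹ * B * C := by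
    have e1 : P⁻¹ * (P + B) * C = P⁻¹ := by rw [Matrix.mul_assoc, hQC, Matrix.mul_one]
    have e2 : P⁻¹ * P * C = C := by rw [hPP, Matrix.one_mul]
    calc P⁻¹ - C = P⁻¹ * (P + B) * C - P⁻¹ * P * C := by rw [e1, e2]
    _ = P⁻¹ * B * C := by rw [Matrix.mul_add, Matrix.add_mul]; abel
  have h2 : P⁻¹ - C = C * B * P⁻¹ := by
    have e1 : C * (P + B) * P⁻¹ = P⁻¹ := by rw [hCQ, Matrix.one_mul]
    have e2 : C * P * P⁻¹ = C := by rw [Matrix.mul_assoc, hPP', Matrix.mul_one]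
    calc P⁻¹ - C = C * (P + B) * P⁻¹ - C * P * P⁻¹ := by rw [e1, e2]
    _ = C * B * P⁻¹ := by rw [Matrix.mul_add, Matrix.add_mul]; abel
  have hPinv : P⁻¹ = C + P⁻¹ * B * C := by rw [← h1]; abel
  have key : P⁻¹ - C = C * B * C + C * B * P⁻¹ * B * C := by
    calc P⁻¹ - C = C * B * P⁻¹ := h2
    _ = C * B * (C + P⁻¹ * B * C) := by rw [← hPinv]
    _ = C * B * C + C * B * P⁻¹ * B * C := by
        rw [Matrix.mul_add]; congr 1; simp only [Matrix.mul_assoc]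
  have hconj : (C * B * P⁻¹ * B * C).PosSemidef := by
    have hsym : (B * C)ᴴ = C * B := by
      rw [Matrix.conjTranspose_mul, hB.1, hQ.inv.isHermitian]
    have hps := (hP.inv.posSemidef).conjTranspose_mul_mul_same (B * C)
    rw [hsym] at hps
    simpa only [Matrix.mul_assoc] using hps
  have htr : P⁻¹.trace - C.trace = (C * B * C).trace + (C * B * P⁻¹ * B * C).trace := by
    rw [← Matrix.trace_add, ← key, Matrix.trace_sub]
  have h4 : 0 ≤ (C * B * P⁻¹ * B * C).trace := aux_trace_nonneg hconj
  have h5 : B.trace * (L ^ 2)⁻¹ ≤ (C * B * C).trace := by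
    have hps := aux_inv_sq hQ h
    have h6 : 0 ≤ ((C * C - (L ^ 2)⁻¹ • (1 : Matrix (Fin n) (Fin n) ℝ)) * B).trace :=
      aux_trace_mul_nonneg hps hB
    have h7 : ((C * C - (L ^ 2)⁻¹ • (1 : Matrix (Fin n) (Fin n) ℝ)) * B).trace
        = (C * C * B).trace - (L ^ 2)⁻¹ * B.trace := by
      rw [Matrix.sub_mul, Matrix.trace_sub, Matrix.smul_mul, Matrix.one_mul,
        Matrix.trace_smul, smul_eq_mul]
    have h8 : (C * B * C).trace = (C * C * B).trace := Matrix.trace_mul_cycle C B C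
    have := mul_comm B.trace (L ^ 2)⁻¹
    linarith
  linarith

end AuxLemmas

/-- With a base positive definite Gramian `W₀` and positive semidefinite actuator Gramians
`W_ω`, letting `W̄_S = W₀ + ∑_{ω ∈ S} W_ω`, adding an actuator `ω ∉ S` decreases the trace
of the inverse by at least `tr(W_ω) / λ_max(W̄_V)² ≥ 0`; in particular
`S ↦ -tr(W̄_S⁻¹)` is nondecreasing. -/
theorem trace_inv_gramian_monotone
    {n : ℕ} {V : Type*} [Fintype V] [DecidableEq V]
    (W₀ : Matrix (Fin n) (Fin n) ℝ) (hW₀ : W₀.PosDef)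
    (W : V → Matrix (Fin n) (Fin n) ℝ) (hW : ∀ ω, (W ω).PosSemidef) :
    (∀ S : Finset V, ∀ ω ∉ S,
      ((W₀ + ∑ i ∈ S, W i)⁻¹).trace - ((W₀ + ∑ i ∈ insert ω S, W i)⁻¹).trace ≥
        (W ω).trace / (lambdaMax (W₀ + ∑ i ∈ (Finset.univ : Finset V), W i)) ^ 2 ∧
      (W ω).trace / (lambdaMax (W₀ + ∑ i ∈ (Finset.univ : Finset V), W i)) ^ 2 ≥ 0) ∧
    (∀ (S : Finset V) (ω : V),
      -(((W₀ + ∑ i ∈ insert ω S, W i)⁻¹).trace) ≥ -(((W₀ + ∑ i ∈ S, W i)⁻¹).trace)) := by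
  classical
  set WV := W₀ + ∑ i ∈ (Finset.univ : Finset V), W i with hWVdef
  have hsumPSD : ∀ S : Finset V, (∑ i ∈ S, W i).PosSemidef := fun S =>
    Finset.sum_induction W Matrix.PosSemidef (fun a b ha hb => ha.add hb)
      Matrix.PosSemidef.zero (fun i _ => hW i)
  have hPD : ∀ S : Finset V, (W₀ + ∑ i ∈ S, W i).PosDef := fun S =>
    hW₀.add_posSemidef (hsumPSD S)
  have hWV : WV.PosDef := hPD Finset.univ
  set L := lambdaMax WV with hLdef
  have hL1 : (L • (1 : Matrix (Fin n) (Fin n) ℝ) - WV).PosSemidef :=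
    aux_lambdaMax_psd hWV.isHermitian
  have key : ∀ S : Finset V, ∀ ω ∉ S,
      ((W₀ + ∑ i ∈ S, W i)⁻¹).trace - ((W₀ + ∑ i ∈ insert ω S, W i)⁻¹).trace ≥
        (W ω).trace / L ^ 2 := by
    intro S ω hω
    have hins : W₀ + ∑ i ∈ insert ω S, W i = (W₀ + ∑ i ∈ S, W i) + W ω := by
      rw [Finset.sum_insert hω]; abel
    have hcomp : WV - ((W₀ + ∑ i ∈ S, W i) + W ω) = ∑ i ∈ (insert ω S)ᶜ, W i := by
      rw [hWVdef, ← Finset.sum_add_sum_compl (insert ω S) W, Finset.sum_insert hω]; abel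
    have hle : (L • (1 : Matrix (Fin n) (Fin n) ℝ) -
        ((W₀ + ∑ i ∈ S, W i) + W ω)).PosSemidef := by
      have heq : L • (1 : Matrix (Fin n) (Fin n) ℝ) - ((W₀ + ∑ i ∈ S, W i) + W ω)
          = (L • (1 : Matrix (Fin n) (Fin n) ℝ) - WV) +
            (WV - ((W₀ + ∑ i ∈ S, W i) + W ω)) := by abel
      rw [heq, hcomp]
      exact hL1.add (hsumPSD _)
    have hres := aux_resolvent (hPD S) (hW ω) hle
    rw [hins, ge_iff_le, div_eq_mul_inv]
    exact hres
  refine ⟨fun S ω hω => ⟨key S ω hω,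
    div_nonneg (aux_trace_nonneg (hW ω)) (sq_nonneg L)⟩, ?_⟩
  intro S ω
  by_cases hω : ω ∈ S
  · rw [Finset.insert_eq_self.mpr hω]
  · have h1 := key S ω hω
    have h2 : (0:ℝ) ≤ (W ω).trace / L ^ 2 :=
      div_nonneg (aux_trace_nonneg (hW ω)) (sq_nonneg L)
    linarith
end

section
/- Let V be a nonempty finite index set, W_0 an n×n real symmetric positive definite matrix, and for each ω ∈ V let W_ω be an n×n real symmetric positive semidefinite matrix; set W̄_S := W_0 + ∑_{ω ∈ S} W_ω. Then for all Ω, S ⊆ V: ∑_{ω ∈ Ω \ S} [tr(W̄_S^{−1}) − tr(W̄_{S ∪ {ω}}^{−1})] ≥ |Ω \ S| · (min_{ω ∈ V} tr(W_ω)) / λ_1(W̄_V)². -/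
open Matrix
open scoped MatrixOrder in
noncomputable def Matrix.PosSemidef.sqrt {n : ℕ} {M : Matrix (Fin n) (Fin n) ℝ} (_ : M.PosSemidef) :
    Matrix (Fin n) (Fin n) ℝ := CFC.sqrt M
open scoped MatrixOrder in
lemma Matrix.PosSemidef.sqrt_mul_self {n : ℕ} {M : Matrix (Fin n) (Fin n) ℝ} (hM : M.PosSemidef) :
    hM.sqrt * hM.sqrt = M := CFC.sqrt_mul_sqrt_self M hM.nonneg
open scoped MatrixOrder in
lemma Matrix.PosSemidef.posSemidef_sqrt {n : ℕ} {M : Matrix (Fin n) (Fin n) ℝ} (hM : M.PosSemidef) :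
    hM.sqrt.PosSemidef := (CFC.sqrt_nonneg M).posSemidef
open scoped MatrixOrder in
lemma Matrix.posSemidef_iff_eq_transpose_mul_self {n : ℕ} {M : Matrix (Fin n) (Fin n) ℝ} :
    M.PosSemidef ↔ ∃ B : Matrix (Fin n) (Fin n) ℝ, M = Bᴴ * B := by
  rw [← nonneg_iff_posSemidef, CStarAlgebra.nonneg_iff_eq_star_mul_self]
  rfl
namespace TraceInvAux
variable {n : ℕ}

lemma psd_smul {c : ℝ} (hc : 0 ≤ c) {M : Matrix (Fin n) (Fin n) ℝ} (hM : M.PosSemidef) :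
    (c • M).PosSemidef := by
  refine ⟨?_, fun x => ?_⟩
  · have h : Mᵀ = M := by
      rw [← Matrix.conjTranspose_eq_transpose_of_trivial]; exact hM.1
    simp [Matrix.IsHermitian, h]
  · exact (hM.smul hc).2 x

lemma trace_nonneg' {M : Matrix (Fin n) (Fin n) ℝ} (hM : M.PosSemidef) : 0 ≤ M.trace := by
  obtain ⟨B, rfl⟩ := Matrix.posSemidef_iff_eq_transpose_mul_self.mp hM
  rw [Matrix.trace]
  refine Finset.sum_nonneg fun i _ => ?_
  rw [Matrix.diag_apply, Matrix.mul_apply]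
  refine Finset.sum_nonneg fun j _ => ?_
  rw [Matrix.conjTranspose_apply]
  simpa using mul_self_nonneg (B j i)

lemma sqrt_comm {M : Matrix (Fin n) (Fin n) ℝ} (hM : M.PosSemidef) :
    hM.sqrt * M = M * hM.sqrt := by
  set S := hM.sqrt with hS
  have h : S * S = M := hM.sqrt_mul_self
  rw [← h, Matrix.mul_assoc]

lemma inv_sub_smul_one_posSemidef {M : Matrix (Fin n) (Fin n) ℝ} (hM : M.PosDef) {c : ℝ}
    (hc : 0 < c) (h : ((c • 1 : Matrix (Fin n) (Fin n) ℝ) - M).PosSemidef) :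
    (M⁻¹ - c⁻¹ • (1 : Matrix (Fin n) (Fin n) ℝ)).PosSemidef := by
  have hMdet : IsUnit M.det := hM.det_pos.ne'.isUnit
  have hMinv : M⁻¹.PosDef := hM.inv
  set P := hMinv.posSemidef with hP
  set S := P.sqrt with hSdef
  have hS : S * S = M⁻¹ := P.sqrt_mul_self
  have hSH : Sᴴ = S := P.posSemidef_sqrt.1
  have hcomm1 : S * M⁻¹ = M⁻¹ * S := sqrt_comm P
  have hcomm2 : S * M = M * S := by
    have h2 := congrArg (fun X => M * X * M) hcomm1
    simp only [Matrix.mul_assoc] at h2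
    rw [Matrix.nonsing_inv_mul M hMdet, Matrix.mul_one] at h2
    rw [← Matrix.mul_assoc M M⁻¹, Matrix.mul_nonsing_inv M hMdet, Matrix.one_mul] at h2
    exact h2.symm
  have hSMS : S * M * S = 1 := by
    rw [hcomm2, Matrix.mul_assoc, hS, Matrix.mul_nonsing_inv M hMdet]
  have key : M⁻¹ - c⁻¹ • (1 : Matrix (Fin n) (Fin n) ℝ)
      = c⁻¹ • (S * ((c • 1 : Matrix (Fin n) (Fin n) ℝ) - M) * S) := by
    rw [Matrix.mul_sub, Matrix.sub_mul, hSMS]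
    rw [Matrix.mul_smul, Matrix.mul_one, Matrix.smul_mul, hS]
    rw [smul_sub, smul_smul, inv_mul_cancel₀ hc.ne', one_smul]
  rw [key]
  refine psd_smul (by positivity) ?_
  have := h.mul_mul_conjTranspose_same S
  rwa [hSH] at this

lemma sq_sub_smul_one_posSemidef {D : Matrix (Fin n) (Fin n) ℝ} (hD : D.PosSemidef) {c : ℝ}
    (hc : 0 ≤ c) (h : (D - c • (1 : Matrix (Fin n) (Fin n) ℝ)).PosSemidef) :
    (D * D - (c ^ 2) • (1 : Matrix (Fin n) (Fin n) ℝ)).PosSemidef := by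
  set T := h.sqrt with hTdef
  have hT2 : T * T = D - c • 1 := h.sqrt_mul_self
  have hTH : Tᴴ = T := h.posSemidef_sqrt.1
  have hcommT : T * (D - c • (1 : Matrix (Fin n) (Fin n) ℝ)) = (D - c • 1) * T := sqrt_comm h
  have hcomm : T * D = D * T := by
    rw [Matrix.mul_sub, Matrix.sub_mul] at hcommT
    have e : T * (c • (1 : Matrix (Fin n) (Fin n) ℝ)) = (c • (1 : Matrix (Fin n) (Fin n) ℝ)) * T := by
      rw [Matrix.mul_smul, Matrix.mul_one, Matrix.smul_mul, Matrix.one_mul]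
    rw [e] at hcommT
    exact sub_left_inj.mp hcommT
  have key : D * D - (c ^ 2) • (1 : Matrix (Fin n) (Fin n) ℝ)
      = T * (D + c • 1) * T := by
    have step : T * (D + c • (1 : Matrix (Fin n) (Fin n) ℝ)) = (D + c • 1) * T := by
      rw [Matrix.mul_add, Matrix.add_mul, hcomm, Matrix.mul_smul, Matrix.mul_one,
        Matrix.smul_mul, Matrix.one_mul]
    have e2 : T * (D + c • (1 : Matrix (Fin n) (Fin n) ℝ)) * T = (D + c • 1) * (T * T) := by
      rw [step, Matrix.mul_assoc]
    rw [e2, hT2, Matrix.add_mul, Matrix.mul_sub, Matrix.mul_sub, Matrix.mul_smul, Matrix.mul_one,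
      Matrix.smul_mul, Matrix.one_mul, Matrix.smul_mul, Matrix.one_mul, smul_smul, pow_two c]
    abel
  rw [key]
  have hpsd : (D + c • (1 : Matrix (Fin n) (Fin n) ℝ)).PosSemidef :=
    hD.add (psd_smul hc Matrix.PosSemidef.one)
  have := hpsd.mul_mul_conjTranspose_same T
  rwa [hTH] at this

lemma le_trace_mul {B K : Matrix (Fin n) (Fin n) ℝ} (hB : B.PosSemidef) {c : ℝ}
    (h : (K - c • (1 : Matrix (Fin n) (Fin n) ℝ)).PosSemidef) :
    c * B.trace ≤ (B * K).trace := by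
  set C := hB.sqrt with hCdef
  have hC2 : C * C = B := hB.sqrt_mul_self
  have hCH : Cᴴ = C := hB.posSemidef_sqrt.1
  have h1 : (B * K).trace = (C * K * C).trace := by
    rw [← hC2, Matrix.mul_assoc, Matrix.trace_mul_comm]
  have hpsd : (C * (K - c • (1 : Matrix (Fin n) (Fin n) ℝ)) * C).PosSemidef := by
    have := h.mul_mul_conjTranspose_same C
    rwa [hCH] at this
  have h2 := trace_nonneg' hpsd
  have h3 : C * (K - c • (1 : Matrix (Fin n) (Fin n) ℝ)) * C = C * K * C - c • B := by
    rw [Matrix.mul_sub, Matrix.sub_mul, Matrix.mul_smul, Matrix.mul_one, Matrix.smul_mul, hC2]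
  rw [h3, Matrix.trace_sub, Matrix.trace_smul, smul_eq_mul] at h2
  linarith [h1]

lemma marginal {A B : Matrix (Fin n) (Fin n) ℝ} (hA : A.PosDef) (hB : B.PosSemidef) {c : ℝ}
    (hc : 0 < c) (h : ((c • 1 : Matrix (Fin n) (Fin n) ℝ) - (A + B)).PosSemidef) :
    B.trace / c ^ 2 ≤ A⁻¹.trace - (A + B)⁻¹.trace := by
  have hM : (A + B).PosDef := hA.add_posSemidef hB
  have hAdet : IsUnit A.det := hA.det_pos.ne'.isUnit
  have hMdet : IsUnit (A + B).det := hM.det_pos.ne'.isUnit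
  set D := (A + B)⁻¹ with hDdef
  have hDpd : D.PosDef := hM.inv
  have hA1 : A⁻¹ * A = 1 := Matrix.nonsing_inv_mul A hAdet
  have hA2 : A * A⁻¹ = 1 := Matrix.mul_nonsing_inv A hAdet
  have hM1 : D * (A + B) = 1 := Matrix.nonsing_inv_mul _ hMdet
  have hM2 : (A + B) * D = 1 := Matrix.mul_nonsing_inv _ hMdet
  have f1 : A⁻¹ - D = A⁻¹ * B * D := by
    have e : A⁻¹ * ((A + B) * D) = A⁻¹ := by rw [hM2, Matrix.mul_one]
    calc A⁻¹ - D = A⁻¹ * ((A + B) * D) - D := by rw [e]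
      _ = (A⁻¹ * A) * D + A⁻¹ * B * D - D := by noncomm_ring
      _ = A⁻¹ * B * D := by rw [hA1, Matrix.one_mul]; abel
  have f2 : A⁻¹ = D + D * B * A⁻¹ := by
    calc A⁻¹ = (D * (A + B)) * A⁻¹ := by rw [hM1, Matrix.one_mul]
      _ = D * (A * A⁻¹) + D * B * A⁻¹ := by noncomm_ring
      _ = D + D * B * A⁻¹ := by rw [hA2, Matrix.mul_one]
  have e1 : A⁻¹ - D = D * B * D + D * B * A⁻¹ * B * D := by
    rw [f1]
    conv_lhs => rw [f2]
    noncomm_ring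
  have tr_eq : A⁻¹.trace - D.trace = (D * B * D).trace + (D * B * A⁻¹ * B * D).trace := by
    rw [← Matrix.trace_add, ← e1, Matrix.trace_sub]
  have hDH : Dᴴ = D := hDpd.posSemidef.1
  have hBH : Bᴴ = B := hB.1
  have psd2 : (D * B * A⁻¹ * B * D).PosSemidef := by
    have := (hA.inv.posSemidef).mul_mul_conjTranspose_same (D * B)
    rw [Matrix.conjTranspose_mul, hDH, hBH] at this
    simpa [Matrix.mul_assoc] using this
  have tr2 : 0 ≤ (D * B * A⁻¹ * B * D).trace := trace_nonneg' psd2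
  have hDlow : (D - c⁻¹ • (1 : Matrix (Fin n) (Fin n) ℝ)).PosSemidef :=
    inv_sub_smul_one_posSemidef hM hc h
  have hD2 : (D * D - (c⁻¹ ^ 2) • (1 : Matrix (Fin n) (Fin n) ℝ)).PosSemidef :=
    sq_sub_smul_one_posSemidef hDpd.posSemidef (by positivity) hDlow
  have h3 : c⁻¹ ^ 2 * B.trace ≤ (B * (D * D)).trace := le_trace_mul hB hD2
  have h4 : (B * (D * D)).trace = (D * B * D).trace := by
    rw [Matrix.trace_mul_cycle D B D, Matrix.trace_mul_comm B (D * D), Matrix.mul_assoc]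
  have h5 : B.trace / c ^ 2 = c⁻¹ ^ 2 * B.trace := by
    rw [div_eq_mul_inv, ← inv_pow, mul_comm]
  rw [h5]
  linarith


lemma smul_one_sub_posSemidef (M : Matrix (Fin n) (Fin n) ℝ) (hM : M.IsHermitian) :
    (((⨆ i, hM.eigenvalues i) • 1 : Matrix (Fin n) (Fin n) ℝ) - M).PosSemidef := by
  set l := ⨆ i, hM.eigenvalues i with hl
  set U : Matrix (Fin n) (Fin n) ℝ := (hM.eigenvectorUnitary : Matrix (Fin n) (Fin n) ℝ) with hU
  have hUU : U * star U = 1 := (Matrix.mem_unitaryGroup_iff).mp hM.eigenvectorUnitary.2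
  have hspec : M = U * Matrix.diagonal hM.eigenvalues * star U := by
    have := hM.spectral_theorem
    simpa using this
  have h1 : (l • 1 : Matrix (Fin n) (Fin n) ℝ) = U * (l • 1) * star U := by
    rw [Matrix.mul_smul, Matrix.mul_one, Matrix.smul_mul, hUU]
  have hdiag : Matrix.diagonal (fun i => l - hM.eigenvalues i)
      = (l • 1 : Matrix (Fin n) (Fin n) ℝ) - Matrix.diagonal hM.eigenvalues := by
    rw [Matrix.smul_one_eq_diagonal, Matrix.diagonal_sub]
  have key : U * Matrix.diagonal (fun i => l - hM.eigenvalues i) * star U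
      = (l • 1 : Matrix (Fin n) (Fin n) ℝ) - M := by
    rw [hdiag, Matrix.mul_sub, Matrix.sub_mul, ← h1, ← hspec]
  rw [← key, Matrix.star_eq_conjTranspose]
  refine Matrix.PosSemidef.mul_mul_conjTranspose_same ?_ U
  refine Matrix.posSemidef_diagonal_iff.mpr fun i => ?_
  have : hM.eigenvalues i ≤ l := le_ciSup (Set.Finite.bddAbove (Set.finite_range _)) i
  linarith

end TraceInvAux

open Matrix

/-- The sum of marginal decreases of `tr(W̄_S⁻¹)` over `ω ∈ Ω \ S` is at least
`|Ω \ S| · (min_ω tr(W_ω)) / λ_max(W̄_V)²`, where `W̄_S = W₀ + ∑_{ω ∈ S} W_ω`. -/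
theorem trace_inv_gramian_marginal_sum_lower_bound
    {n : ℕ} {V : Type*} [Fintype V] [DecidableEq V] [Nonempty V]
    (W₀ : Matrix (Fin n) (Fin n) ℝ) (hW₀ : W₀.PosDef)
    (W : V → Matrix (Fin n) (Fin n) ℝ) (hW : ∀ ω, (W ω).PosSemidef) :
    ∀ Ω S : Finset V,
      ∑ ω ∈ Ω \ S,
          (((W₀ + ∑ i ∈ S, W i)⁻¹).trace - ((W₀ + ∑ i ∈ insert ω S, W i)⁻¹).trace) ≥
        ((Ω \ S).card : ℝ) *
          ((⨅ ω : V, (W ω).trace) /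
            (lambdaMax (W₀ + ∑ i ∈ (Finset.univ : Finset V), W i)) ^ 2) := by
  intro Ω S
  have hsum_psd : ∀ T : Finset V, (∑ i ∈ T, W i).PosSemidef := fun T =>
    Finset.sum_induction W _ (fun a b ha hb => ha.add hb) Matrix.PosSemidef.zero
      (fun i _ => hW i)
  rcases Nat.eq_zero_or_pos n with hn | hn
  · subst hn
    have htr : ∀ M : Matrix (Fin 0) (Fin 0) ℝ, M.trace = 0 := fun M => by
      simp [Matrix.trace]
    have hinf : (⨅ ω : V, (W ω).trace) = 0 := by
      simp only [htr]; exact ciInf_const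
    simp [htr, hinf]
  · haveI : Nonempty (Fin n) := ⟨⟨0, hn⟩⟩
    have hV : (W₀ + ∑ i ∈ (Finset.univ : Finset V), W i).PosDef :=
      hW₀.add_posSemidef (hsum_psd _)
    have hherm : (W₀ + ∑ i ∈ (Finset.univ : Finset V), W i).IsHermitian := hV.isHermitian
    set l := lambdaMax (W₀ + ∑ i ∈ (Finset.univ : Finset V), W i) with hldef
    have hlam : l = ⨆ i, hherm.eigenvalues i := by
      rw [hldef, lambdaMax, dif_pos hherm]
    have hlpos : 0 < l := by
      rw [hlam]
      obtain ⟨i⟩ := (inferInstance : Nonempty (Fin n))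
      exact lt_of_lt_of_le (hV.eigenvalues_pos i)
        (le_ciSup (Set.Finite.bddAbove (Set.finite_range _)) i)
    have key : ∀ ω ∈ Ω \ S,
        (⨅ ω : V, (W ω).trace) / l ^ 2 ≤
          ((W₀ + ∑ i ∈ S, W i)⁻¹).trace - ((W₀ + ∑ i ∈ insert ω S, W i)⁻¹).trace := by
      intro ω hω
      have hωS : ω ∉ S := (Finset.mem_sdiff.mp hω).2
      set A := W₀ + ∑ i ∈ S, W i with hAdef
      have hApd : A.PosDef := hW₀.add_posSemidef (hsum_psd S)
      have hins : W₀ + ∑ i ∈ insert ω S, W i = A + W ω := by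
        rw [Finset.sum_insert hωS, hAdef]; abel
      have hcover : ((l • 1 : Matrix (Fin n) (Fin n) ℝ) - (A + W ω)).PosSemidef := by
        have h1 := TraceInvAux.smul_one_sub_posSemidef _ hherm
        rw [← hlam] at h1
        have h2 : ((W₀ + ∑ i ∈ (Finset.univ : Finset V), W i) - (A + W ω)).PosSemidef := by
          have hsd : (W₀ + ∑ i ∈ (Finset.univ : Finset V), W i) - (A + W ω)
              = ∑ i ∈ Finset.univ \ insert ω S, W i := by
            rw [← hins]
            rw [← Finset.sum_sdiff (Finset.subset_univ (insert ω S)) (f := W)]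
            abel
          rw [hsd]
          exact hsum_psd _
        have := h1.add h2
        have e : ((l • 1 : Matrix (Fin n) (Fin n) ℝ)
              - (W₀ + ∑ i ∈ (Finset.univ : Finset V), W i))
            + ((W₀ + ∑ i ∈ (Finset.univ : Finset V), W i) - (A + W ω))
            = (l • 1 : Matrix (Fin n) (Fin n) ℝ) - (A + W ω) := by abel
        rwa [e] at this
      have hmarg := TraceInvAux.marginal hApd (hW ω) hlpos hcover
      rw [hins]
      refine le_trans ?_ hmarg
      gcongr
      exact ciInf_le (Set.Finite.bddBelow (Set.finite_range _)) ω
    have hsum := Finset.card_nsmul_le_sum (Ω \ S) _ _ key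
    rw [nsmul_eq_mul] at hsum
    exact hsum
end

section
/- Let V be a finite ground set and f : 2^V → ℝ a nondecreasing set function. Suppose γ, α ∈ (0, 1] are such that (i) ∑_{ω ∈ Ω \ S} ρ_ω(S) ≥ γ · ρ_Ω(S) for all Ω, S ⊆ V, and (ii) ρ_j((S \ {j}) ∪ Ω) ≥ (1 − α) · ρ_j(S \ {j}) for all Ω, S ⊆ V and all j ∈ S \ Ω. Let k be a positive integer and let S_0 = ∅, S_{i+1} = S_i ∪ {e_i}, where e_i ∈ V \ S_i maximizes f(S_i ∪ {e}) − f(S_i) over e ∈ V \ S_i, for i = 0, …, k−1. Then f(S_k) − f(∅) ≥ (1/α)·(1 − e^{−αγ}) · (max{ f(S) : S ⊆ V, |S| ≤ k } − f(∅)). -/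
lemma aux_star (α γ : ℝ) (hα0 : 0 < α) (hα1 : α ≤ 1) (hγ0 : 0 < γ) (hγ1 : γ ≤ 1)
    (n κ : ℕ) (hnκ : n + 1 ≤ κ) :
    γ/(κ:ℝ) - α*γ/(κ:ℝ) ≤ (1 - α*γ/(κ:ℝ))^(n+1) - (1 - γ/(κ:ℝ))*(1 - α*γ/((κ:ℝ)-1))^n := by
  induction n with
  | zero => rw [pow_one, pow_zero, mul_one]; linarith
  | succ n ih =>
    have hκ2 : 2 ≤ κ := by omega
    have hK2 : (2:ℝ) ≤ (κ:ℝ) := by exact_mod_cast hκ2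
    have hK0 : (0:ℝ) < (κ:ℝ) := by linarith
    have hK10 : (0:ℝ) < (κ:ℝ) - 1 := by linarith
    set K : ℝ := (κ:ℝ) with hKdef
    set b : ℝ := γ/K with hbdef
    set a : ℝ := α*γ/K with hadef
    set a' : ℝ := α*γ/(K-1) with ha'def
    have hihyp := ih (by omega)
    have hαγ1 : α*γ ≤ 1 := by nlinarith
    have ha'1 : a' ≤ 1 := by rw [ha'def, div_le_one hK10]; linarith
    have ha'0 : 0 ≤ a' := by rw [ha'def]; exact div_nonneg (by positivity) hK10.le
    have ha0 : 0 ≤ a := by rw [hadef]; positivity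
    have hb0 : 0 ≤ b := by rw [hbdef]; positivity
    have ha1 : a ≤ 1 := by rw [hadef, div_le_one hK0]; linarith
    have hb1 : b ≤ 1 := by rw [hbdef, div_le_one hK0]; linarith
    have hab : a = α * b := by rw [hadef, hbdef]; ring
    -- Bernoulli : (1-a')^n ≥ 1 - n*a' ≥ 1 - α*γ
    have hber : 1 - (n:ℝ)*a' ≤ (1-a')^n := by
      have h := one_add_mul_le_pow (a := -a') (by linarith) n
      have h2 : 1 + (n:ℝ)*(-a') = 1 - (n:ℝ)*a' := by ring
      have h3 : ((1:ℝ) + -a') = 1 - a' := by ring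
      rw [h2, h3] at h; exact h
    have hna' : (n:ℝ)*a' ≤ α*γ := by
      have hn0 : (0:ℝ) ≤ (n:ℝ) := Nat.cast_nonneg n
      have hnK : (n:ℝ) ≤ K - 1 := by
        rw [hKdef]
        have h := (Nat.cast_le (α := ℝ)).mpr hnκ
        push_cast at h
        linarith
      have hKa : (K-1)*a' = α*γ := by rw [ha'def]; field_simp
      nlinarith
    have hPn : 1 - α*γ ≤ (1-a')^n := by linarith
    have hPn0 : 0 ≤ (1-a')^n := pow_nonneg (by linarith) n
    -- key : (K-1)*b*(1-α) ≤ (1-b)*(1-α*γ)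
    have hkey : (K-1)*b*(1-α) ≤ (1-b)*(1-α*γ) := by
      have hcl : (K-1)*γ*(1-α) ≤ (K-γ)*(1-α*γ) := by
        nlinarith [mul_nonneg (sub_nonneg.mpr hγ1) (by nlinarith : (0:ℝ) ≤ K - α*γ)]
      have e1 : (K-1)*b*(1-α) = ((K-1)*γ*(1-α))/K := by rw [hbdef]; ring
      have e2 : (1-b)*(1-α*γ) = ((K-γ)*(1-α*γ))/K := by
        rw [hbdef]; field_simp
      rw [e1, e2]
      gcongr
    have hxy : (1-a) - (1-a') = a/(K-1) := by
      rw [hadef, ha'def]; field_simp; ring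
    have hid : (1-a)^(n+1+1) - (1-b)*(1-a')^(n+1)
        = (1-a)*((1-a)^(n+1) - (1-b)*(1-a')^n) + (1-b)*(1-a')^n*((1-a)-(1-a')) := by
      rw [pow_succ (1-a) (n+1), pow_succ (1-a') n]; ring
    have t1 : (1-a)*(b-a) ≤ (1-a)*((1-a)^(n+1) - (1-b)*(1-a')^n) :=
      mul_le_mul_of_nonneg_left hihyp (by linarith)
    have h4 : 0 ≤ a/(K-1) := div_nonneg ha0 hK10.le
    have hmono1 : (1-b)*(1-α*γ) ≤ (1-b)*(1-a')^n :=
      mul_le_mul_of_nonneg_left hPn (by linarith)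
    have t2a : (K-1)*b*(1-α)*(a/(K-1)) ≤ (1-b)*(1-a')^n*(a/(K-1)) :=
      mul_le_mul_of_nonneg_right (le_trans hkey hmono1) h4
    have t2b : (K-1)*b*(1-α)*(a/(K-1)) = a*(b-a) := by
      rw [hab]; field_simp
    have t2 : a*(b-a) ≤ (1-b)*(1-a')^n*((1-a)-(1-a')) := by
      rw [hxy, ← t2b]; exact t2a
    have hfin : b - a = (1-a)*(b-a) + a*(b-a) := by ring
    rw [hid]; linarith

lemma aux_rec (α γ : ℝ) (hα0 : 0 < α) (hα1 : α ≤ 1) (hγ0 : 0 < γ) (hγ1 : γ ≤ 1)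
    (k : ℕ) (Θ Φ : ℕ → ℝ) (ρ : ℕ → ℝ) (κ : ℕ → ℕ)
    (hρ0 : ∀ i < k, 0 ≤ ρ i)
    (hkey : ∀ i < k, γ * Φ i ≤ (κ i : ℝ) * ρ i)
    (hΘ : ∀ i < k, Θ (i+1) = Θ i - α * ρ i)
    (hΦκ : ∀ i < k, (Φ (i+1) = Φ i - ρ i ∧ κ (i+1) + 1 = κ i) ∨
                    (Φ (i+1) = Φ i - α * ρ i ∧ κ (i+1) = κ i))
    (hκi : ∀ i < k, k ≤ κ i + i) :
    ∀ n, ∀ i, i + n = k →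
      Θ k ≤ Θ i - (1 - (1 - α*γ/(κ i : ℝ))^n) * max (Φ i) 0 := by
  intro n
  induction n with
  | zero =>
    intro i hik
    have : i = k := by omega
    subst this
    simp
  | succ n ih =>
    intro i hik
    have hik' : i < k := by omega
    have hΘi := hΘ i hik'
    have hρi := hρ0 i hik'
    have hkeyi := hkey i hik'
    have hκii := hκi i hik'
    have hn1κ : n + 1 ≤ κ i := by omega
    have ihh := ih (i+1) (by omega)
    have hαγ1 : α*γ ≤ 1 := by nlinarith
    set K : ℝ := (κ i : ℝ) with hKdef
    have hK1 : (1:ℝ) ≤ K := by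
      rw [hKdef]; exact_mod_cast Nat.one_le_iff_ne_zero.mpr (by omega)
    have hK0 : (0:ℝ) < K := by linarith
    have hKn : (n:ℝ) + 1 ≤ K := by
      rw [hKdef]
      have h := (Nat.cast_le (α := ℝ)).mpr hn1κ
      push_cast at h; linarith
    set a : ℝ := α*γ/K with hadef
    set b : ℝ := γ/K with hbdef
    have ha0 : 0 ≤ a := by rw [hadef]; positivity
    have hb0 : 0 ≤ b := by rw [hbdef]; positivity
    have ha1 : a ≤ 1 := by rw [hadef, div_le_one hK0]; linarith
    have hb1 : b ≤ 1 := by rw [hbdef, div_le_one hK0]; linarith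
    have hab : a = α * b := by rw [hadef, hbdef]; ring
    have h1a : 0 ≤ 1 - a := by linarith
    have hber : 1 - ((n:ℝ)+1)*a ≤ (1-a)^(n+1) := by
      have h := one_add_mul_le_pow (a := -a) (by linarith) (n+1)
      have h2 : 1 + ((n+1:ℕ):ℝ)*(-a) = 1 - ((n:ℝ)+1)*a := by push_cast; ring
      have h3 : ((1:ℝ) + -a) = 1 - a := by ring
      rw [h2, h3] at h; exact h
    have hKa : K * a = α*γ := by rw [hadef]; field_simp
    have hpa : 1 - (1-a)^(n+1) ≤ α := by nlinarith
    have hbΦρ : b * Φ i ≤ ρ i := by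
      rw [hbdef, div_mul_eq_mul_div, div_le_iff₀ hK0]
      nlinarith
    have hgen : ∀ κ' : ℕ, (1 - α*γ/(κ' : ℝ))^n ≤ 1 := by
      intro κ'
      rcases Nat.eq_zero_or_pos κ' with h0 | hpos
      · simp [h0]
      · have hc0 : (0:ℝ) < (κ' : ℝ) := by exact_mod_cast hpos
        apply pow_le_one₀
        · have : α*γ/(κ' : ℝ) ≤ 1 := by
            rw [div_le_one hc0]
            have h1c : (1:ℝ) ≤ (κ' : ℝ) := by exact_mod_cast hpos
            linarith
          linarith
        · have : 0 ≤ α*γ/(κ' : ℝ) := by positivity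
          linarith
    have hαρ : 0 ≤ α * ρ i := mul_nonneg hα0.le hρi
    rcases le_or_gt (Φ i) 0 with hφ | hφ
    · -- Φ i ≤ 0 : trivial since coefficient of max vanishes
      rw [max_eq_right hφ, mul_zero, sub_zero]
      have hp' : 0 ≤ 1 - (1 - α*γ/(κ (i+1) : ℝ))^n := by linarith [hgen (κ (i+1))]
      have hm0 : 0 ≤ max (Φ (i+1)) 0 := le_max_right _ _
      have := mul_nonneg hp' hm0
      linarith
    · rw [max_eq_left hφ.le]
      rcases hΦκ i hik' with ⟨hΦ1, hκs⟩ | ⟨hΦ1, hκs⟩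
      · -- in-step : κ (i+1) = κ i - 1
        have hKm1 : ((κ (i+1) : ℕ) : ℝ) = K - 1 := by
          rw [hKdef]
          have h := congrArg (fun m : ℕ => (m : ℝ)) hκs
          push_cast at h; linarith
        rw [hKm1] at ihh
        set Pn : ℝ := (1 - α*γ/(K-1))^n with hPndef
        have hPn1 : Pn ≤ 1 := by
          rcases Nat.eq_zero_or_pos n with h0 | hpos
          · subst h0; simp [hPndef]
          · have hK2 : (2:ℝ) ≤ K := by
              have h1n : (1:ℝ) ≤ (n:ℝ) := by exact_mod_cast hpos
              linarith
            have hK10 : (0:ℝ) < K - 1 := by linarith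
            rw [hPndef]
            apply pow_le_one₀
            · have : α*γ/(K-1) ≤ 1 := by rw [div_le_one hK10]; linarith
              linarith
            · have : 0 ≤ α*γ/(K-1) := div_nonneg (by positivity) (by linarith)
              linarith
        have hp'0 : 0 ≤ 1 - Pn := by linarith
        rcases le_or_gt (Φ i) (ρ i) with hρφ | hρφ
        · -- ρ i ≥ Φ i
          have hm0 : 0 ≤ max (Φ (i+1)) 0 := le_max_right _ _
          have hstep1 : Θ k ≤ Θ i - α * ρ i := by
            have := mul_nonneg hp'0 hm0
            linarith
          have t := mul_le_mul_of_nonneg_right hpa hφ.le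
          have t2 : α * Φ i ≤ α * ρ i := mul_le_mul_of_nonneg_left hρφ hα0.le
          linarith
        · -- ρ i < Φ i
          rw [hΦ1] at ihh
          have hmax2 : max (Φ i - ρ i) 0 = Φ i - ρ i := max_eq_left (by linarith)
          rw [hmax2] at ihh
          rcases le_or_gt (1 - Pn) α with hcase | hcase
          · have hstar := aux_star α γ hα0 hα1 hγ0 hγ1 n (κ i) hn1κ
            rw [← hKdef, ← hadef, ← hbdef, ← hPndef] at hstar
            -- hstar : b - a ≤ (1-a)^(n+1) - (1-b)*Pn
            have t5 : (α - (1 - Pn)) * (b * Φ i) ≤ (α - (1 - Pn)) * ρ i :=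
              mul_le_mul_of_nonneg_left hbΦρ (by linarith)
            have t6 : (b - a) * Φ i ≤ ((1-a)^(n+1) - (1-b)*Pn) * Φ i :=
              mul_le_mul_of_nonneg_right hstar hφ.le
            have t8 : a * Φ i = α * (b * Φ i) := by rw [hab]; ring
            linarith [t5, t6, t8]
          · -- α < 1 - Pn
            have t7 : (α - (1 - Pn)) * ρ i ≥ (α - (1 - Pn)) * Φ i :=
              mul_le_mul_of_nonpos_left hρφ.le (by linarith)
            have t := mul_le_mul_of_nonneg_right hpa hφ.le
            linarith [t7, t]
      · -- out-step : κ (i+1) = κ i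
        have hKeq : ((κ (i+1) : ℕ) : ℝ) = K := by
          rw [hκs]
        rw [hKeq, hΦ1] at ihh
        rw [pow_succ]
        set Q : ℝ := (1-a)^n with hQdef
        have hQ0 : 0 ≤ Q := by rw [hQdef]; exact pow_nonneg h1a n
        have hp'0 : 0 ≤ 1 - Q := by
          have := hgen (κ i); rw [← hKdef, ← hadef, ← hQdef] at this; linarith
        have hmax2 : (1 - Q) * (Φ i - α * ρ i) ≤ (1 - Q) * max (Φ i - α * ρ i) 0 :=
          mul_le_mul_of_nonneg_left (le_max_left _ _) hp'0
        have haΦ : a * Φ i ≤ α * ρ i := by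
          rw [hab, mul_assoc]
          exact mul_le_mul_of_nonneg_left hbΦρ hα0.le
        have h8 : a * Φ i * Q ≤ α * ρ i * Q := mul_le_mul_of_nonneg_right haΦ hQ0
        linarith [h8, hmax2]
/-- Greedy guarantee for a nondecreasing (not necessarily normalized) set function with
submodularity ratio at least `γ` and curvature at most `α`: the greedy gain over `f ∅`
is at least a `(1/α)·(1 - e^{-αγ})` fraction of the optimal gain over `f ∅`. -/
theorem greedy_nonsubmodular_bound_non_normalized
    {V : Type*} [Fintype V] [DecidableEq V]
    (f : Finset V → ℝ)
    (hmono : ∀ (A : Finset V) (s : V), f (insert s A) ≥ f A)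
    (γ α : ℝ) (hγ0 : 0 < γ) (hγ1 : γ ≤ 1) (hα0 : 0 < α) (hα1 : α ≤ 1)
    (hratio : ∀ Ω S : Finset V,
      ∑ ω ∈ Ω \ S, (f (insert ω S) - f S) ≥ γ * (f (S ∪ Ω) - f S))
    (hcurv : ∀ Ω S : Finset V, ∀ j ∈ S \ Ω,
      f (S ∪ Ω) - f ((S.erase j) ∪ Ω) ≥ (1 - α) * (f S - f (S.erase j)))
    (k : ℕ) (hk : 0 < k)
    (S : ℕ → Finset V) (e : ℕ → V)
    (hS0 : S 0 = ∅)
    (hstep : ∀ i < k, S (i + 1) = insert (e i) (S i))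
    (hmem : ∀ i < k, e i ∉ S i)
    (hgreedy : ∀ i < k, ∀ x ∉ S i,
      f (insert (e i) (S i)) - f (S i) ≥ f (insert x (S i)) - f (S i)) :
    ∀ T : Finset V, T.card ≤ k →
      f (S k) - f ∅ ≥ (1 / α) * (1 - Real.exp (-(α * γ))) * (f T - f ∅) := by
  intro T hT
  -- monotonicity over unions
  have hsub : ∀ (A B : Finset V), f B ≤ f (A ∪ B) := by
    intro A B
    induction A using Finset.induction_on with
    | empty => simp
    | @insert a s ha ih =>
        rw [Finset.insert_union]
        exact le_trans ih (hmono (s ∪ B) a)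
  have hF0 : 0 ≤ f T - f ∅ := by
    have := hsub T ∅
    rw [Finset.union_empty] at this
    linarith
  have hScard : ∀ i, i ≤ k → (S i).card ≤ i := by
    intro i
    induction i with
    | zero => intro _; simp [hS0]
    | succ i ih =>
        intro hik
        rw [hstep i (by omega)]
        have h1 := Finset.card_insert_le (e i) (S i)
        have h2 := ih (by omega)
        omega
  have hρnn : ∀ i < k, 0 ≤ f (S (i+1)) - f (S i) := by
    intro i hi
    rw [hstep i hi]
    linarith [hmono (S i) (e i)]
  have hmT : ∀ i, i ≤ k → (S i ∩ T).card ≤ i := by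
    intro i hi
    exact le_trans (Finset.card_le_card Finset.inter_subset_left) (hScard i hi)
  -- curvature telescoping
  have hC : ∀ i, i ≤ k →
      f T + (1-α) * (∑ t ∈ Finset.range i,
        if e t ∈ T then (0:ℝ) else f (S (t+1)) - f (S t)) ≤ f (S i ∪ T) := by
    intro i
    induction i with
    | zero => intro _; simp [hS0]
    | succ i ih =>
        intro hik
        have hik' : i < k := by omega
        have ihh := ih (by omega)
        rw [Finset.sum_range_succ]
        by_cases hei : e i ∈ T
        · have hset : S (i+1) ∪ T = S i ∪ T := by
            rw [hstep i hik', Finset.insert_union,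
              Finset.insert_eq_self.mpr (Finset.mem_union_right _ hei)]
          rw [hset, if_pos hei]
          linarith
        · have hcv := hcurv (S i ∪ T) (insert (e i) (S i)) (e i)
            (Finset.mem_sdiff.mpr ⟨Finset.mem_insert_self _ _,
              by simp [Finset.mem_union, hmem i hik', hei]⟩)
          rw [Finset.erase_insert (hmem i hik')] at hcv
          have hu1 : insert (e i) (S i) ∪ (S i ∪ T) = S (i+1) ∪ T := by
            rw [hstep i hik']
            ext x
            simp only [Finset.mem_union, Finset.mem_insert]
            tauto
          have hu2 : S i ∪ (S i ∪ T) = S i ∪ T := by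
            rw [← Finset.union_assoc, Finset.union_self]
          rw [hu1, hu2] at hcv
          have hfs : f (insert (e i) (S i)) = f (S (i+1)) := by rw [hstep i hik']
          rw [hfs] at hcv
          rw [if_neg hei]
          linarith
  -- telescoping sum
  have htel : ∀ i, f (S i) - f ∅ = ∑ t ∈ Finset.range i, (f (S (t+1)) - f (S t)) := by
    intro i
    rw [Finset.sum_range_sub (fun t => f (S t)) i, hS0]
  have hsplit : ∀ i,
      (∑ t ∈ Finset.range i, if e t ∈ T then f (S (t+1)) - f (S t) else (0:ℝ)) +
      (∑ t ∈ Finset.range i, if e t ∈ T then (0:ℝ) else f (S (t+1)) - f (S t)) =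
      ∑ t ∈ Finset.range i, (f (S (t+1)) - f (S t)) := by
    intro i
    rw [← Finset.sum_add_distrib]
    apply Finset.sum_congr rfl
    intro t _
    by_cases h : e t ∈ T <;> simp [h]
  -- greedy + submodularity ratio
  have hq : ∀ i, i < k → γ*(f (S i ∪ T) - f (S i)) ≤
      ((k - (S i ∩ T).card : ℕ):ℝ) * (f (S (i+1)) - f (S i)) := by
    intro i hi
    have h1 := hratio T (S i)
    have h2 : ∀ ω ∈ T \ S i, f (insert ω (S i)) - f (S i) ≤ f (S (i+1)) - f (S i) := by
      intro ω hω
      rw [hstep i hi]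
      exact hgreedy i hi ω (Finset.mem_sdiff.mp hω).2
    have h3 := Finset.sum_le_card_nsmul _ _ _ h2
    rw [nsmul_eq_mul] at h3
    have h4 : (T \ S i).card ≤ k - (S i ∩ T).card := by
      have hc := Finset.card_sdiff_add_card_inter T (S i)
      have hcc : (T ∩ S i).card = (S i ∩ T).card := by rw [Finset.inter_comm]
      omega
    have h5 : ((T \ S i).card : ℝ) ≤ ((k - (S i ∩ T).card : ℕ) : ℝ) := by
      exact_mod_cast h4
    have h6 := hρnn i hi
    calc γ*(f (S i ∪ T) - f (S i)) ≤ ∑ ω ∈ T \ S i, (f (insert ω (S i)) - f (S i)) := h1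
      _ ≤ ((T \ S i).card : ℝ) * (f (S (i+1)) - f (S i)) := h3
      _ ≤ ((k - (S i ∩ T).card : ℕ) : ℝ) * (f (S (i+1)) - f (S i)) :=
          mul_le_mul_of_nonneg_right h5 h6
  -- the key per-step inequality
  have hkey : ∀ i, i < k →
      γ * ((f T - f ∅) -
        (∑ t ∈ Finset.range i, if e t ∈ T then f (S (t+1)) - f (S t) else (0:ℝ)) -
        α * (∑ t ∈ Finset.range i, if e t ∈ T then (0:ℝ) else f (S (t+1)) - f (S t)))
      ≤ ((k - (S i ∩ T).card : ℕ):ℝ) * (f (S (i+1)) - f (S i)) := by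
    intro i hi
    have hCi := hC i (le_of_lt hi)
    have hqi := hq i hi
    have hteli := htel i
    have hspi := hsplit i
    have hΦle : (f T - f ∅) -
        (∑ t ∈ Finset.range i, if e t ∈ T then f (S (t+1)) - f (S t) else (0:ℝ)) -
        α * (∑ t ∈ Finset.range i, if e t ∈ T then (0:ℝ) else f (S (t+1)) - f (S t))
        ≤ f (S i ∪ T) - f (S i) := by linarith
    calc γ * _ ≤ γ * (f (S i ∪ T) - f (S i)) := mul_le_mul_of_nonneg_left hΦle hγ0.le
      _ ≤ _ := hqi
  -- recurrences
  have hTheta : ∀ i, i < k →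
      (f T - f ∅) - α*(f (S (i+1)) - f ∅) =
      ((f T - f ∅) - α*(f (S i) - f ∅)) - α * (f (S (i+1)) - f (S i)) := by
    intro i _; ring
  have hPhiKappa : ∀ i, i < k →
      (((f T - f ∅) -
        (∑ t ∈ Finset.range (i+1), if e t ∈ T then f (S (t+1)) - f (S t) else (0:ℝ)) -
        α * (∑ t ∈ Finset.range (i+1), if e t ∈ T then (0:ℝ) else f (S (t+1)) - f (S t)))
       = ((f T - f ∅) -
        (∑ t ∈ Finset.range i, if e t ∈ T then f (S (t+1)) - f (S t) else (0:ℝ)) -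
        α * (∑ t ∈ Finset.range i, if e t ∈ T then (0:ℝ) else f (S (t+1)) - f (S t)))
          - (f (S (i+1)) - f (S i))
       ∧ (k - (S (i+1) ∩ T).card) + 1 = k - (S i ∩ T).card) ∨
      (((f T - f ∅) -
        (∑ t ∈ Finset.range (i+1), if e t ∈ T then f (S (t+1)) - f (S t) else (0:ℝ)) -
        α * (∑ t ∈ Finset.range (i+1), if e t ∈ T then (0:ℝ) else f (S (t+1)) - f (S t)))
       = ((f T - f ∅) -
        (∑ t ∈ Finset.range i, if e t ∈ T then f (S (t+1)) - f (S t) else (0:ℝ)) -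
        α * (∑ t ∈ Finset.range i, if e t ∈ T then (0:ℝ) else f (S (t+1)) - f (S t)))
          - α * (f (S (i+1)) - f (S i))
       ∧ (k - (S (i+1) ∩ T).card) = k - (S i ∩ T).card) := by
    intro i hi
    by_cases hei : e i ∈ T
    · left
      constructor
      · rw [Finset.sum_range_succ, Finset.sum_range_succ, if_pos hei, if_pos hei]
        ring
      · have hins : S (i+1) ∩ T = insert (e i) (S i ∩ T) := by
          rw [hstep i hi, Finset.insert_inter_of_mem hei]
        have hcard : (S (i+1) ∩ T).card = (S i ∩ T).card + 1 := by
          rw [hins]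
          exact Finset.card_insert_of_notMem
            (fun hcon => hmem i hi (Finset.mem_inter.mp hcon).1)
        have := hmT i (le_of_lt hi)
        omega
    · right
      constructor
      · rw [Finset.sum_range_succ, Finset.sum_range_succ, if_neg hei, if_neg hei]
        ring
      · have hins : S (i+1) ∩ T = S i ∩ T := by
          rw [hstep i hi, Finset.insert_inter_of_notMem hei]
        rw [hins]
  have hkappai : ∀ i, i < k → k ≤ (k - (S i ∩ T).card) + i := by
    intro i hi
    have := hmT i (le_of_lt hi)
    omega
  -- apply the recursion lemma
  have hmain := aux_rec α γ hα0 hα1 hγ0 hγ1 k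
      (fun i => (f T - f ∅) - α*(f (S i) - f ∅))
      (fun i => (f T - f ∅) -
        (∑ t ∈ Finset.range i, if e t ∈ T then f (S (t+1)) - f (S t) else (0:ℝ)) -
        α * (∑ t ∈ Finset.range i, if e t ∈ T then (0:ℝ) else f (S (t+1)) - f (S t)))
      (fun t => f (S (t+1)) - f (S t))
      (fun i => k - (S i ∩ T).card)
      hρnn hkey hTheta hPhiKappa hkappai k 0 (by omega)
  simp only [Finset.range_zero, Finset.sum_empty, hS0, Finset.empty_inter,
    Finset.card_empty, Nat.sub_zero, sub_self, mul_zero, sub_zero] at hmain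
  rw [max_eq_left hF0] at hmain
  -- hmain : (f T - f ∅) - α*(f (S k) - f ∅) ≤ (f T - f ∅) - (1 - (1-α*γ/k)^k)*(f T - f ∅)
  have hk0 : (0:ℝ) < (k:ℝ) := by exact_mod_cast hk
  have hk1 : (1:ℝ) ≤ (k:ℝ) := by exact_mod_cast hk
  have hαγ1 : α*γ ≤ 1 := by nlinarith
  have hexp : (1 - α*γ/(k:ℝ))^k ≤ Real.exp (-(α*γ)) := by
    have h1 : 1 - α*γ/(k:ℝ) ≤ Real.exp (-(α*γ/(k:ℝ))) := by
      have := Real.add_one_le_exp (-(α*γ/(k:ℝ)))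
      linarith
    have h0 : 0 ≤ 1 - α*γ/(k:ℝ) := by
      rw [sub_nonneg, div_le_one hk0]
      linarith
    calc (1 - α*γ/(k:ℝ))^k ≤ (Real.exp (-(α*γ/(k:ℝ))))^k := pow_le_pow_left₀ h0 h1 k
      _ = Real.exp ((k:ℝ) * (-(α*γ/(k:ℝ)))) := by rw [← Real.exp_nat_mul]
      _ = Real.exp (-(α*γ)) := by
          congr 1
          have hkne : (k:ℝ) ≠ 0 := ne_of_gt hk0
          field_simp
  have hFe : (1 - Real.exp (-(α*γ)))*(f T - f ∅) ≤ α*(f (S k) - f ∅) := by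
    have hmono2 : (1 - (1 - α*γ/(k:ℝ))^k) * (f T - f ∅) ≥
        (1 - Real.exp (-(α*γ))) * (f T - f ∅) :=
      mul_le_mul_of_nonneg_right (by linarith) hF0
    linarith
  rw [ge_iff_le, show (1/α)*(1 - Real.exp (-(α*γ)))*(f T - f ∅) =
      ((1 - Real.exp (-(α*γ)))*(f T - f ∅))/α from by ring, div_le_iff₀ hα0]
  linarith
end
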